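/- arXiv:2508.21348 — 4 statements merged into one kernel-verified Lean document; each statement's English description precedes it below -/
import Mathlib

section
/- A linear map Φ : ℂ^{m×m} → ℂ^{d×d} is k-positive if and only if ⟨ψ| C(Φ) |ψ⟩ ≥ 0 for all vectors ψ ∈ ℂ^m ⊗ ℂ^d of Schmidt rank at most k, where C(Φ) = Σ_{i,j} |i⟩⟨j| ⊗ Φ(|i⟩⟨j|) is the Choi matrix of Φ. -/
open scoped ComplexOrder

/-- The map `id_k ⊗ Φ` acting on block matrices: for `A ∈ ℂ^{km×km}` viewed as a `k×k` matrix of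
`m×m` blocks, apply `Φ` to each block. -/
noncomputable def idTensor {k m d : Type*} [Fintype k] [Fintype m] [Fintype d]
    (Φ : Matrix m m ℂ → Matrix d d ℂ) (A : Matrix (k × m) (k × m) ℂ) :
    Matrix (k × d) (k × d) ℂ :=
  Matrix.of fun p q => Φ (Matrix.of fun s t => A (p.1, s) (q.1, t)) p.2 q.2

/-- The Choi matrix `C(Φ) = ∑_{i,j} |i⟩⟨j| ⊗ Φ(|i⟩⟨j|)` of a map
`Φ : ℂ^{m×m} → ℂ^{d×d}`. -/
noncomputable def choiMatrix {m d : Type*} [Fintype m] [Fintype d] [DecidableEq m]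
    (Φ : Matrix m m ℂ → Matrix d d ℂ) : Matrix (m × d) (m × d) ℂ :=
  Matrix.of fun p q => Φ (Matrix.single p.1 q.1 1) p.2 q.2

section aux

lemma posSemidef_of_quadform {n : Type*} [Fintype n] [DecidableEq n] (M : Matrix n n ℂ)
    (h : ∀ x : n → ℂ, 0 ≤ dotProduct (star x) (M.mulVec x)) : M.PosSemidef := by
  refine Matrix.PosSemidef.of_dotProduct_mulVec_nonneg ?_ h
  rw [Matrix.isHermitian_iff_isSymmetric, LinearMap.isSymmetric_iff_inner_map_self_real]
  intro v
  set x : n → ℂ := WithLp.equiv 2 (n → ℂ) v with hx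
  have key : (inner ℂ (Matrix.toEuclideanLin M v) v : ℂ)
      = star (dotProduct (star x) (M.mulVec x)) := by
    rw [EuclideanSpace.inner_eq_star_dotProduct]
    simp only [Matrix.ofLp_toEuclideanLin_apply]; change dotProduct x (star (M.mulVec x)) = _
    simp [dotProduct, mul_comm]
  have hsa : star (dotProduct (star x) (M.mulVec x))
      = dotProduct (star x) (M.mulVec x) := IsSelfAdjoint.of_nonneg (h x)
  rw [key, hsa]
  rw [starRingEnd_apply]; exact hsa

lemma sum_pad {k n : ℕ} (hn : n ≤ k) {α : Type*} [AddCommMonoid α] (g : Fin n → α) :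
    ∑ s : Fin k, (if h : (s : ℕ) < n then g ⟨s, h⟩ else 0) = ∑ t : Fin n, g t := by
  have h1 := Fin.sum_univ_eq_sum_range (fun i => if h : i < n then g ⟨i, h⟩ else 0) k
  have h2 := Fin.sum_univ_eq_sum_range (fun i => if h : i < n then g ⟨i, h⟩ else 0) n
  rw [h1, ← Finset.sum_subset (Finset.range_subset_range.2 hn) (fun i _ hi => by
    rw [dif_neg (by simpa using hi)]), ← h2]
  refine Finset.sum_congr rfl fun t _ => ?_
  rw [dif_pos t.isLt]

lemma exists_factorization {m d k : ℕ} (X : Matrix (Fin m) (Fin d) ℂ) (hX : X.rank ≤ k) :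
    ∃ (v : Fin k × Fin m → ℂ) (z : Fin k × Fin d → ℂ),
      ∀ i a, X i a = ∑ s : Fin k, (starRingEnd ℂ) (v (s, i)) * z (s, a) := by
  set W := LinearMap.range X.mulVecLin with hW
  have hr : Module.finrank ℂ W ≤ k := hX
  let b := Module.finBasis ℂ W
  have hcol : ∀ a : Fin d, (fun i => X i a) ∈ W := by
    intro a
    exact ⟨Pi.single a 1, by simp [Matrix.mulVec_single]; rfl⟩
  refine ⟨fun p => if h : (p.1 : ℕ) < Module.finrank ℂ W
      then (starRingEnd ℂ) (((b ⟨p.1, h⟩ : W) : Fin m → ℂ) p.2) else 0,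
    fun p => if h : (p.1 : ℕ) < Module.finrank ℂ W
      then b.repr ⟨fun i => X i p.2, hcol p.2⟩ ⟨p.1, h⟩ else 0,
    fun i a => ?_⟩
  have := b.sum_repr ⟨fun i => X i a, hcol a⟩
  have h2 : ∑ t, b.repr ⟨fun i => X i a, hcol a⟩ t * ((b t : W) : Fin m → ℂ) i = X i a := by
    calc ∑ t, b.repr ⟨fun i => X i a, hcol a⟩ t * ((b t : W) : Fin m → ℂ) i
        = ((↑(∑ t, b.repr ⟨fun i => X i a, hcol a⟩ t • b t) : Fin m → ℂ)) i := by
          rw [Submodule.coe_sum]; simp [Finset.sum_apply]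
      _ = X i a := by rw [this]
  rw [← h2]
  rw [← sum_pad hr (fun t => b.repr ⟨fun i => X i a, hcol a⟩ t * ((b t : W) : Fin m → ℂ) i)]
  refine Finset.sum_congr rfl fun s _ => ?_
  simp only []
  by_cases h : (s : ℕ) < Module.finrank ℂ W
  · rw [dif_pos h, dif_pos h, dif_pos h, Complex.conj_conj, mul_comm]
  · rw [dif_neg h, dif_neg h, dif_neg h, map_zero, zero_mul]

lemma rank_factored {m d k : ℕ} (v : Fin k × Fin m → ℂ) (z : Fin k × Fin d → ℂ) :
    (Matrix.of fun i a => ∑ s : Fin k, (starRingEnd ℂ) (v (s, i)) * z (s, a)).rank ≤ k := by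
  have hfac : (Matrix.of fun i a => ∑ s : Fin k, (starRingEnd ℂ) (v (s, i)) * z (s, a)) =
      (Matrix.of fun (i : Fin m) (s : Fin k) => (starRingEnd ℂ) (v (s, i))) *
        (Matrix.of fun (s : Fin k) (a : Fin d) => z (s, a)) := by
    ext i a; simp [Matrix.mul_apply]
  rw [hfac]
  exact le_trans (Matrix.rank_mul_le_right _ _)
    (le_trans (Matrix.rank_le_card_height _) (by simp))

lemma phi_entry {m d : ℕ} (Φ : Matrix (Fin m) (Fin m) ℂ →ₗ[ℂ] Matrix (Fin d) (Fin d) ℂ)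
    (B : Matrix (Fin m) (Fin m) ℂ) (a b : Fin d) :
    Φ B a b = ∑ i : Fin m, ∑ j : Fin m, B i j * Φ (Matrix.single i j 1) a b := by
  conv_lhs => rw [Matrix.matrix_eq_sum_single B]
  rw [map_sum, Matrix.sum_apply]
  refine Finset.sum_congr rfl fun i _ => ?_
  rw [map_sum, Matrix.sum_apply]
  refine Finset.sum_congr rfl fun j _ => ?_
  have : Matrix.single i j (B i j) = B i j • Matrix.single i j 1 := by
    rw [Matrix.smul_single, smul_eq_mul, mul_one]
  rw [this, map_smul]
  simp

lemma sum_rearrange {A B C D E F M : Type*} [Fintype A] [Fintype B] [Fintype C] [Fintype D]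
    [Fintype E] [Fintype F] [AddCommMonoid M] (f : A → B → C → D → E → F → M) :
    ∑ s : A, ∑ a : B, ∑ t : C, ∑ b : D, ∑ i : E, ∑ j : F, f s a t b i j
    = ∑ i : E, ∑ a : B, ∑ j : F, ∑ b : D, ∑ s : A, ∑ t : C, f s a t b i j := by
  have h1 : (∑ x : A × (B × (C × (D × (E × F)))),
      f x.1 x.2.1 x.2.2.1 x.2.2.2.1 x.2.2.2.2.1 x.2.2.2.2.2)
      = ∑ s : A, ∑ a : B, ∑ t : C, ∑ b : D, ∑ i : E, ∑ j : F, f s a t b i j := by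
    simp only [Fintype.sum_prod_type]
  have h2 : (∑ y : E × (B × (F × (D × (A × C)))),
      f y.2.2.2.2.1 y.2.1 y.2.2.2.2.2 y.2.2.2.1 y.1 y.2.2.1)
      = ∑ i : E, ∑ a : B, ∑ j : F, ∑ b : D, ∑ s : A, ∑ t : C, f s a t b i j := by
    simp only [Fintype.sum_prod_type]
  rw [← h1, ← h2]
  refine Fintype.sum_equiv ⟨fun x => (x.2.2.2.2.1, x.2.1, x.2.2.2.2.2, x.2.2.2.1, x.1, x.2.2.1),
    fun y => (y.2.2.2.2.1, y.2.1, y.2.2.2.2.2, y.2.2.2.1, y.1, y.2.2.1),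
    fun ⟨s,a,t,b,i,j⟩ => rfl, fun ⟨i,a,j,b,s,t⟩ => rfl⟩ _ _ fun ⟨s,a,t,b,i,j⟩ => rfl

lemma quad_eq {m d k : ℕ} (Φ : Matrix (Fin m) (Fin m) ℂ →ₗ[ℂ] Matrix (Fin d) (Fin d) ℂ)
    (v : Fin k × Fin m → ℂ) (z : Fin k × Fin d → ℂ) :
    dotProduct (star z)
      ((idTensor (k := Fin k) (⇑Φ) (Matrix.of fun p q => v p * star (v q))).mulVec z)
    = dotProduct
        (star fun p : Fin m × Fin d => ∑ s : Fin k, (starRingEnd ℂ) (v (s, p.1)) * z (s, p.2))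
        ((choiMatrix (⇑Φ)).mulVec
          fun p : Fin m × Fin d => ∑ s : Fin k, (starRingEnd ℂ) (v (s, p.1)) * z (s, p.2)) := by
  have hM : ∀ (s t : Fin k) (a b : Fin d),
      idTensor (k := Fin k) (⇑Φ) (Matrix.of fun p q => v p * star (v q)) (s, a) (t, b)
      = ∑ i : Fin m, ∑ j : Fin m,
          v (s, i) * (starRingEnd ℂ) (v (t, j)) * Φ (Matrix.single i j 1) a b := by
    intro s t a b
    show Φ (Matrix.of fun i j =>
      (Matrix.of fun p q => v p * star (v q)) (s, i) (t, j)) a b = _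
    rw [phi_entry]
    simp only [Matrix.of_apply, starRingEnd_apply]
  have step1 : dotProduct (star z)
      ((idTensor (k := Fin k) (⇑Φ) (Matrix.of fun p q => v p * star (v q))).mulVec z)
      = ∑ s : Fin k, ∑ a : Fin d, ∑ t : Fin k, ∑ b : Fin d, ∑ i : Fin m, ∑ j : Fin m,
          (starRingEnd ℂ) (z (s, a)) *
            (v (s, i) * (starRingEnd ℂ) (v (t, j)) * Φ (Matrix.single i j 1) a b)
            * z (t, b) := by
        simp only [dotProduct, Matrix.mulVec, Pi.star_apply, Fintype.sum_prod_type,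
          starRingEnd_apply]
        refine Finset.sum_congr rfl fun s _ => Finset.sum_congr rfl fun a _ => ?_
        rw [Finset.mul_sum]
        refine Finset.sum_congr rfl fun t _ => ?_
        rw [Finset.mul_sum]
        refine Finset.sum_congr rfl fun b _ => ?_
        rw [hM s t a b, Finset.sum_mul, Finset.mul_sum]
        refine Finset.sum_congr rfl fun i _ => ?_
        rw [Finset.sum_mul, Finset.mul_sum]
        refine Finset.sum_congr rfl fun j _ => ?_
        rw [starRingEnd_apply]
        ring
  have step3 : (∑ i : Fin m, ∑ a : Fin d, ∑ j : Fin m, ∑ b : Fin d, ∑ s : Fin k, ∑ t : Fin k,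
          (starRingEnd ℂ) (z (s, a)) *
            (v (s, i) * (starRingEnd ℂ) (v (t, j)) * Φ (Matrix.single i j 1) a b)
            * z (t, b))
      = dotProduct
        (star fun p : Fin m × Fin d => ∑ s : Fin k, (starRingEnd ℂ) (v (s, p.1)) * z (s, p.2))
        ((choiMatrix (⇑Φ)).mulVec
          fun p : Fin m × Fin d => ∑ s : Fin k, (starRingEnd ℂ) (v (s, p.1)) * z (s, p.2)) := by
        simp only [dotProduct, Matrix.mulVec, Pi.star_apply, Fintype.sum_prod_type,
          choiMatrix, Matrix.of_apply, map_sum, map_mul, Complex.conj_conj, starRingEnd_apply]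
        refine Finset.sum_congr rfl fun i _ => Finset.sum_congr rfl fun a _ => ?_
        symm
        rw [Finset.mul_sum]
        refine Finset.sum_congr rfl fun j _ => ?_
        rw [Finset.mul_sum]
        refine Finset.sum_congr rfl fun b _ => ?_
        rw [star_sum, Finset.sum_mul]
        refine Finset.sum_congr rfl fun s _ => ?_
        rw [star_mul, star_star, Finset.mul_sum, Finset.mul_sum]
        refine Finset.sum_congr rfl fun t _ => ?_
        ring
  rw [step1, sum_rearrange, step3]

end aux

set_option maxHeartbeats 1000000 in
/-- A linear map `Φ : ℂ^{m×m} → ℂ^{d×d}` is `k`-positive (i.e. `id_k ⊗ Φ` maps positive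
semi-definite matrices to positive semi-definite matrices) if and only if
`⟨ψ| C(Φ) |ψ⟩ ≥ 0` for all `ψ ∈ ℂ^m ⊗ ℂ^d` of Schmidt rank at most `k`, i.e. for all
`ψ = vec X` with `X ∈ ℂ^{m×d}` of rank at most `k`. -/
theorem kPositive_iff_choi_schmidt (m d k : ℕ)
    (Φ : Matrix (Fin m) (Fin m) ℂ →ₗ[ℂ] Matrix (Fin d) (Fin d) ℂ) :
    (∀ A : Matrix (Fin k × Fin m) (Fin k × Fin m) ℂ,
      A.PosSemidef → (idTensor (k := Fin k) (⇑Φ) A).PosSemidef) ↔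
    (∀ X : Matrix (Fin m) (Fin d) ℂ, X.rank ≤ k →
      0 ≤ dotProduct (star fun p : Fin m × Fin d => X p.1 p.2)
        ((choiMatrix (⇑Φ)).mulVec fun p : Fin m × Fin d => X p.1 p.2)) := by
  constructor
  · intro hA X hX
    obtain ⟨v, z, hvz⟩ := exists_factorization X hX
    have hvec : (fun p : Fin m × Fin d => X p.1 p.2)
        = fun p : Fin m × Fin d => ∑ s : Fin k, (starRingEnd ℂ) (v (s, p.1)) * z (s, p.2) :=
      funext fun p => hvz p.1 p.2
    have hpsd : (Matrix.of fun p q : Fin k × Fin m => v p * star (v q)).PosSemidef := by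
      refine posSemidef_of_quadform _ fun x => ?_
      have hc : dotProduct (star x)
          ((Matrix.of fun p q : Fin k × Fin m => v p * star (v q)).mulVec x)
          = star (∑ q, star (v q) * x q) * (∑ q, star (v q) * x q) := by
        have e1 : star (∑ q, star (v q) * x q) = ∑ p, star (x p) * v p := by
          rw [star_sum]
          exact Finset.sum_congr rfl fun p _ => by rw [star_mul, star_star]
        rw [e1, Finset.sum_mul_sum]
        simp only [dotProduct, Matrix.mulVec, Matrix.of_apply, Pi.star_apply]
        refine Finset.sum_congr rfl fun p _ => ?_
        rw [Finset.mul_sum]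
        refine Finset.sum_congr rfl fun q _ => ?_
        ring
      rw [hc]
      exact star_mul_self_nonneg _
    have hq := (hA _ hpsd).dotProduct_mulVec_nonneg z
    rw [quad_eq Φ v z] at hq
    rw [hvec]
    exact hq
  · intro hC A hA
    obtain ⟨B, hB⟩ : ∃ B : Matrix (Fin k × Fin m) (Fin k × Fin m) ℂ, A = Matrix.conjTranspose B * B := by
      open scoped MatrixOrder in
      exact CStarAlgebra.nonneg_iff_eq_star_mul_self.mp (Matrix.nonneg_iff_posSemidef.mpr hA)
    have hlin : idTensor (k := Fin k) (⇑Φ) A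
        = ∑ r : Fin k × Fin m, idTensor (k := Fin k) (⇑Φ)
            (Matrix.of fun p q : Fin k × Fin m => star (B r p) * star (star (B r q))) := by
      ext p q
      have hblock : (Matrix.of fun s t => A (p.1, s) (q.1, t))
          = ∑ r : Fin k × Fin m, Matrix.of fun s t =>
              star (B r (p.1, s)) * star (star (B r (q.1, t))) := by
        ext s t
        rw [hB]
        simp [Matrix.mul_apply, Matrix.conjTranspose_apply, Matrix.sum_apply]
      show Φ (Matrix.of fun s t => A (p.1, s) (q.1, t)) p.2 q.2 = _
      rw [hblock, map_sum, Matrix.sum_apply, Matrix.sum_apply]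
      rfl
    refine posSemidef_of_quadform _ fun z => ?_
    let φ : Matrix (Fin k × Fin d) (Fin k × Fin d) ℂ →+ ℂ :=
      { toFun := fun N => dotProduct (star z) (N.mulVec z),
        map_zero' := by simp,
        map_add' := fun N₁ N₂ => by simp [Matrix.add_mulVec, dotProduct_add] }
    have hφ : dotProduct (star z) ((idTensor (k := Fin k) (⇑Φ) A).mulVec z)
        = ∑ r : Fin k × Fin m, dotProduct (star z)
            ((idTensor (k := Fin k) (⇑Φ)
              (Matrix.of fun p q : Fin k × Fin m => star (B r p) * star (star (B r q)))).mulVec z) := by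
      rw [hlin]
      exact map_sum φ _ _
    rw [hφ]
    refine Finset.sum_nonneg fun r _ => ?_
    rw [quad_eq Φ (fun p => star (B r p)) z]
    exact hC (Matrix.of fun i a => ∑ s : Fin k,
        (starRingEnd ℂ) ((fun p : Fin k × Fin m => star (B r p)) (s, i)) * z (s, a))
      (rank_factored (fun p : Fin k × Fin m => star (B r p)) z)
end

section
/- Let S be a closed convex cone of linear maps on ℂ^{d×d} which contains all completely positive maps, contains the identity map, and is closed under composition. Then for every Φ ∈ S, every K ∈ ℂ^{d×d}, and every t ≥ 0, the map exp(t·L) belongs to S, where L(X) = K X + X K† + Φ(X). -/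
open scoped Matrix ComplexOrder


/-- A map `Φ : ℂ^{m×m} → ℂ^{d×d}` is completely positive if `id_n ⊗ Φ` preserves positive
semi-definiteness for every `n`. -/
def IsCompletelyPositive {m d : Type*} [Fintype m] [Fintype d]
    (Φ : Matrix m m ℂ → Matrix d d ℂ) : Prop :=
  ∀ (n : ℕ) (A : Matrix (Fin n × m) (Fin n × m) ℂ),
    A.PosSemidef → (idTensor (k := Fin n) Φ A).PosSemidef

variable {d : ℕ}

section BanachAux
open Filter Finset
variable {A : Type*} [NormedRing A] [NormedAlgebra ℂ A] [CompleteSpace A]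

lemma exp_tail_norm_le (x : A) (k : ℕ) :
    ‖NormedSpace.exp x - ∑ i ∈ range (k+1), ((i.factorial : ℂ))⁻¹ • x ^ i‖
      ≤ ‖x‖ ^ (k+1) * Real.exp ‖x‖ := by
  have h := NormedSpace.exp_series_hasSum_exp' (𝕂 := ℂ) x
  have h2 : HasSum (fun n => (((n + (k+1)).factorial : ℂ))⁻¹ • x ^ (n + (k+1)))
      (NormedSpace.exp x - ∑ i ∈ range (k+1), ((i.factorial : ℂ))⁻¹ • x ^ i) :=
    (hasSum_nat_add_iff' (k+1)).mpr h
  have hr := NormedSpace.exp_series_hasSum_exp' (𝕂 := ℝ) ‖x‖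
  rw [← Real.exp_eq_exp_ℝ] at hr
  have hg : HasSum (fun n => ‖x‖ ^ (k+1) * (((n.factorial : ℝ))⁻¹ • ‖x‖ ^ n))
      (‖x‖ ^ (k+1) * Real.exp ‖x‖) := hr.mul_left _
  rw [← h2.tsum_eq]
  refine tsum_of_norm_bounded hg fun n => ?_
  have h1 : ‖(((n + (k+1)).factorial : ℂ))⁻¹ • x ^ (n + (k+1))‖
      ≤ (((n + (k+1)).factorial : ℝ))⁻¹ * ‖x‖ ^ (n + (k+1)) := by
    rw [norm_smul, norm_inv, Complex.norm_natCast]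
    gcongr
    exact norm_pow_le' x (by omega)
  refine h1.trans ?_
  calc (((n + (k+1)).factorial : ℝ))⁻¹ * ‖x‖ ^ (n + (k+1))
      ≤ ((n.factorial : ℝ))⁻¹ * ‖x‖ ^ (n + (k+1)) := by
        gcongr
        omega
    _ = ‖x‖ ^ (k+1) * (((n.factorial : ℝ))⁻¹ • ‖x‖ ^ n) := by
        rw [smul_eq_mul, pow_add]; ring


lemma norm_exp_le_exp_norm' [NormOneClass A] (x : A) :
    ‖NormedSpace.exp x‖ ≤ Real.exp ‖x‖ := by
  have h := NormedSpace.exp_series_hasSum_exp' (𝕂 := ℂ) x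
  have hr := NormedSpace.exp_series_hasSum_exp' (𝕂 := ℝ) ‖x‖
  rw [← Real.exp_eq_exp_ℝ] at hr
  rw [← h.tsum_eq]
  refine tsum_of_norm_bounded hr fun n => ?_
  rw [norm_smul, norm_inv, Complex.norm_natCast, smul_eq_mul]
  exact mul_le_mul_of_nonneg_left (norm_pow_le x n) (by positivity)

lemma norm_pow_sub_pow_le' (a b : A) (C : ℝ) (ha : ‖a‖ ≤ C) (hb : ‖b‖ ≤ C) :
    ∀ n : ℕ, ‖a ^ (n+1) - b ^ (n+1)‖ ≤ (n+1) * ‖a - b‖ * C ^ n := by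
  have hC : 0 ≤ C := le_trans (norm_nonneg a) ha
  intro n
  induction n with
  | zero => simpa using le_of_eq (by ring)
  | succ n ih =>
    have key : a ^ (n+2) - b ^ (n+2) = a * (a ^ (n+1) - b ^ (n+1)) + (a - b) * b ^ (n+1) := by
      rw [mul_sub, sub_mul, ← pow_succ' a, ← pow_succ' b]
      abel
    rw [key]
    calc ‖a * (a ^ (n+1) - b ^ (n+1)) + (a - b) * b ^ (n+1)‖
        ≤ ‖a * (a ^ (n+1) - b ^ (n+1))‖ + ‖(a - b) * b ^ (n+1)‖ := norm_add_le _ _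
      _ ≤ ‖a‖ * ‖a ^ (n+1) - b ^ (n+1)‖ + ‖a - b‖ * ‖b ^ (n+1)‖ := by
          gcongr <;> exact norm_mul_le _ _
      _ ≤ C * ((n+1) * ‖a - b‖ * C ^ n) + ‖a - b‖ * C ^ (n+1) := by
          gcongr
          exact (norm_pow_le' b (by omega)).trans (by gcongr)
      _ = ((n:ℝ)+1+1) * ‖a - b‖ * C ^ (n+1) := by ring
      _ = ((n+1:ℕ)+1) * ‖a - b‖ * C ^ (n+1) := by push_cast; ring

lemma exp_sub_one_norm_le' (x : A) :
    ‖NormedSpace.exp x - 1‖ ≤ ‖x‖ * Real.exp ‖x‖ := by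
  have h := exp_tail_norm_le x 0
  simpa using h

lemma exp_sub_one_sub_norm_le' (x : A) :
    ‖NormedSpace.exp x - 1 - x‖ ≤ ‖x‖ ^ 2 * Real.exp ‖x‖ := by
  have h := exp_tail_norm_le x 1
  simpa [Finset.sum_range_succ, sub_sub] using h

theorem trotter_formula [NormOneClass A] (X Y : A) :
    Tendsto (fun m : ℕ => (NormedSpace.exp ((m:ℂ)⁻¹ • X) * NormedSpace.exp ((m:ℂ)⁻¹ • Y)) ^ m)
      atTop (nhds (NormedSpace.exp (X + Y))) := by
  set s : ℝ := ‖X‖ + ‖Y‖ with hs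
  have hs0 : 0 ≤ s := by positivity
  have hE1 : (1:ℝ) ≤ Real.exp s := Real.one_le_exp hs0
  rw [tendsto_iff_norm_sub_tendsto_zero]
  apply squeeze_zero_norm' (a := fun m : ℕ => 4 * s^2 * Real.exp s ^ 2 / m)
  · filter_upwards [eventually_ge_atTop 1] with m hm
    have hm0 : (m:ℂ) ≠ 0 := Nat.cast_ne_zero.mpr (by omega)
    have hm1 : (1:ℝ) ≤ (m:ℝ) := by exact_mod_cast hm
    set u : ℂ := (m:ℂ)⁻¹ with hu
    have hnu : ‖u‖ = (m:ℝ)⁻¹ := by simp [hu]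
    set P := NormedSpace.exp (u • (X+Y)) with hP
    set Q := NormedSpace.exp (u • X) * NormedSpace.exp (u • Y) with hQ
    set a : ℝ := ‖u • X‖ with ha
    set b : ℝ := ‖u • Y‖ with hb
    set c : ℝ := ‖u • (X+Y)‖ with hc
    set r : ℝ := a + b with hr
    have ha0 : 0 ≤ a := norm_nonneg _
    have hb0 : 0 ≤ b := norm_nonneg _
    have hr0 : 0 ≤ r := by positivity
    have har : a ≤ r := by simp [hr]; positivity
    have hbr : b ≤ r := by simp [hr]; positivity
    have hcr : c ≤ r := by
      rw [hc, smul_add, hr, ha, hb]; exact norm_add_le _ _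
    have hrs : r = s / m := by
      rw [hr, ha, hb, norm_smul, norm_smul, hnu, hs]
      field_simp
    have hrs' : r ≤ s := by
      rw [hrs]
      calc s / m ≤ s / 1 := by apply div_le_div_of_nonneg_left <;> first | exact hs0 | linarith
        _ = s := div_one s
    have has : a ≤ s := har.trans hrs'
    have hbs : b ≤ s := hbr.trans hrs'
    have hcs : c ≤ s := hcr.trans hrs'
    have hPm : P ^ m = NormedSpace.exp (X + Y) := by
      letI : NormedAlgebra ℚ A := NormedAlgebra.restrictScalars ℚ ℂ A
      rw [hP, ← NormedSpace.exp_nsmul, ← Nat.cast_smul_eq_nsmul ℂ, smul_smul,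
        mul_inv_cancel₀ hm0, one_smul]
    have hexp_ab : Real.exp a * Real.exp b = Real.exp r := by rw [← Real.exp_add]
    have hQP : ‖Q - P‖ ≤ 4 * r^2 * Real.exp s := by
      have hq := exp_sub_one_sub_norm_le' (u • X)
      have hqy := exp_sub_one_sub_norm_le' (u • Y)
      have hqy1 := exp_sub_one_norm_le' (u • Y)
      have hEb : ‖NormedSpace.exp (u • Y)‖ ≤ Real.exp b := norm_exp_le_exp_norm' _
      have hQ1 : ‖Q - 1 - u • (X+Y)‖
          ≤ a^2 * Real.exp a * Real.exp b + a * (b * Real.exp b) + b^2 * Real.exp b := by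
        have key : Q - 1 - u • (X+Y) =
            (NormedSpace.exp (u•X) - 1 - u•X) * NormedSpace.exp (u•Y)
            + (u•X) * (NormedSpace.exp (u•Y) - 1)
            + (NormedSpace.exp (u•Y) - 1 - u•Y) := by
          rw [hQ, smul_add]
          noncomm_ring
        rw [key]
        have t1 : ‖(NormedSpace.exp (u•X) - 1 - u•X) * NormedSpace.exp (u•Y)‖
            ≤ a^2 * Real.exp a * Real.exp b := by
          refine (norm_mul_le _ _).trans ?_
          exact mul_le_mul hq hEb (norm_nonneg _) (by positivity)
        have t2 : ‖(u•X) * (NormedSpace.exp (u•Y) - 1)‖ ≤ a * (b * Real.exp b) := by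
          refine (norm_mul_le _ _).trans ?_
          exact mul_le_mul_of_nonneg_left hqy1 ha0
        calc ‖(NormedSpace.exp (u•X) - 1 - u•X) * NormedSpace.exp (u•Y)
              + (u•X) * (NormedSpace.exp (u•Y) - 1)
              + (NormedSpace.exp (u•Y) - 1 - u•Y)‖
            ≤ ‖(NormedSpace.exp (u•X) - 1 - u•X) * NormedSpace.exp (u•Y)‖
              + ‖(u•X) * (NormedSpace.exp (u•Y) - 1)‖
              + ‖NormedSpace.exp (u•Y) - 1 - u•Y‖ := norm_add₃_le
          _ ≤ a^2 * Real.exp a * Real.exp b + a * (b * Real.exp b) + b^2 * Real.exp b :=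
              add_le_add (add_le_add t1 t2) hqy
      have hP1 : ‖P - 1 - u • (X+Y)‖ ≤ c^2 * Real.exp c := exp_sub_one_sub_norm_le' _
      have hw : Q - P = (Q - 1 - u • (X+Y)) - (P - 1 - u • (X+Y)) := by abel
      rw [hw]
      refine (norm_sub_le _ _).trans ?_
      calc ‖Q - 1 - u • (X+Y)‖ + ‖P - 1 - u • (X+Y)‖
          ≤ (a^2 * Real.exp a * Real.exp b + a * (b * Real.exp b) + b^2 * Real.exp b)
            + c^2 * Real.exp c := add_le_add hQ1 hP1
        _ = a^2 * Real.exp r + a * (b * Real.exp b) + b^2 * Real.exp b + c^2 * Real.exp c := by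
            rw [mul_assoc, hexp_ab]
        _ ≤ r^2 * Real.exp s + r * (r * Real.exp s) + r^2 * Real.exp s + r^2 * Real.exp s := by
            gcongr
        _ = 4 * r^2 * Real.exp s := by ring
    have hnP : ‖P‖ ≤ Real.exp r := (norm_exp_le_exp_norm' _).trans (Real.exp_le_exp.mpr hcr)
    have hnQ : ‖Q‖ ≤ Real.exp r := by
      refine (norm_mul_le _ _).trans ?_
      rw [← hexp_ab]
      exact mul_le_mul (norm_exp_le_exp_norm' _) (norm_exp_le_exp_norm' _)
        (norm_nonneg _) (Real.exp_pos _).le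
    obtain ⟨n, rfl⟩ : ∃ n, m = n + 1 := ⟨m - 1, by omega⟩
    have hpow := norm_pow_sub_pow_le' Q P (Real.exp r) hnQ hnP n
    rw [norm_norm, ← hPm]
    have hern : Real.exp r ^ (n+1) = Real.exp s := by
      rw [← Real.exp_nat_mul, hrs]
      congr 1
      have : ((n:ℝ)+1) ≠ 0 := by positivity
      push_cast
      field_simp
    calc ‖Q ^ (n+1) - P ^ (n+1)‖ ≤ ((n:ℝ)+1) * ‖Q - P‖ * Real.exp r ^ n := hpow
      _ ≤ ((n:ℝ)+1) * (4 * r^2 * Real.exp s) * Real.exp r ^ (n+1) := by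
          gcongr
          · exact Real.one_le_exp hr0
          · omega
      _ = 4 * s^2 * Real.exp s ^ 2 / (n+1:ℕ) := by
          rw [hern, hrs]
          have h1 : ((n+1:ℕ):ℝ) ≠ 0 := by positivity
          field_simp
          push_cast
          ring
  · exact tendsto_const_div_atTop_nhds_zero_nat _

end BanachAux

section LinftyAux

attribute [local instance] Matrix.seminormedAddCommGroup Matrix.normedAddCommGroup
  Matrix.normedSpace

@[reducible] noncomputable def clmNR (d : ℕ) :
    NormedRing (Matrix (Fin d) (Fin d) ℂ →L[ℂ] Matrix (Fin d) (Fin d) ℂ) :=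
  ContinuousLinearMap.toNormedRing
@[reducible] noncomputable def clmNA (d : ℕ) :
    @NormedAlgebra ℂ (Matrix (Fin d) (Fin d) ℂ →L[ℂ] Matrix (Fin d) (Fin d) ℂ) _
      (clmNR d).toSeminormedRing :=
  ContinuousLinearMap.toNormedAlgebra
@[reducible] noncomputable def clmNAQ (d : ℕ) :
    @NormedAlgebra ℚ (Matrix (Fin d) (Fin d) ℂ →L[ℂ] Matrix (Fin d) (Fin d) ℂ) _
      (clmNR d).toSeminormedRing := by
  letI := clmNR d; letI := clmNA d; exact NormedAlgebra.restrictScalars ℚ ℂ _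
@[reducible] noncomputable def clmCS (d : ℕ) :
    @CompleteSpace (Matrix (Fin d) (Fin d) ℂ →L[ℂ] Matrix (Fin d) (Fin d) ℂ)
      (clmNR d).toUniformSpace := by
  haveI : SequentialSpace (Matrix (Fin d) (Fin d) ℂ) :=
    inferInstanceAs (SequentialSpace (Fin d → Fin d → ℂ))
  exact (ContinuousLinearMap.instCompleteSpace : CompleteSpace (Matrix (Fin d) (Fin d) ℂ →L[ℂ] Matrix (Fin d) (Fin d) ℂ))
@[reducible] noncomputable def clmNOC (d : ℕ) [Nontrivial (Matrix (Fin d) (Fin d) ℂ)] :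
    @NormOneClass (Matrix (Fin d) (Fin d) ℂ →L[ℂ] Matrix (Fin d) (Fin d) ℂ)
      (clmNR d).toNorm _ :=
  ContinuousLinearMap.normOneClass
@[reducible] noncomputable def clmTR (d : ℕ) :
    IsTopologicalRing (Matrix (Fin d) (Fin d) ℂ →L[ℂ] Matrix (Fin d) (Fin d) ℂ) :=
  @NonUnitalSeminormedRing.toIsTopologicalRing _
    (clmNR d).toNonUnitalNormedRing.toNonUnitalSeminormedRing
attribute [local instance] clmTR

variable {d : ℕ}

/-- Conjugation `X ↦ A X Aᴴ` as a continuous linear map. -/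
noncomputable def conjCLM (A : Matrix (Fin d) (Fin d) ℂ) :
    Matrix (Fin d) (Fin d) ℂ →L[ℂ] Matrix (Fin d) (Fin d) ℂ :=
  LinearMap.toContinuousLinearMap ((LinearMap.mulLeft ℂ A).comp (LinearMap.mulRight ℂ Aᴴ))

lemma conjCLM_apply (A X : Matrix (Fin d) (Fin d) ℂ) :
    conjCLM A X = A * X * Aᴴ := by
  simp [conjCLM, mul_assoc]

lemma conjCLM_isCP (A : Matrix (Fin d) (Fin d) ℂ) :
    IsCompletelyPositive ⇑(conjCLM A) := by
  intro n B hB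
  classical
  set M : Matrix (Fin n × Fin d) (Fin n × Fin d) ℂ :=
    Matrix.of fun p q => if p.1 = q.1 then A p.2 q.2 else 0 with hM
  have key : idTensor (k := Fin n) (⇑(conjCLM A)) B = M * B * Mᴴ := by
    ext ⟨p1, i⟩ ⟨q1, j⟩
    simp only [idTensor, Matrix.of_apply, conjCLM_apply, Matrix.mul_apply,
      Matrix.conjTranspose_apply, hM, Fintype.sum_prod_type]
    simp only [Finset.sum_comm (γ := Fin n)]
    rw [Finset.sum_comm]
    simp [Finset.mul_sum, Finset.sum_mul, ite_mul, mul_ite, apply_ite (starRingEnd ℂ),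
      Finset.sum_ite_eq, Finset.sum_ite_eq', mul_comm, mul_assoc, mul_left_comm]
  rw [key]
  exact hB.mul_mul_conjTranspose_same M

local notation "Md" => Matrix (Fin d) (Fin d) ℂ

/-- Left regular representation as an algebra hom into continuous linear maps. -/
noncomputable def leftRep (d : ℕ) :
    Matrix (Fin d) (Fin d) ℂ →ₐ[ℂ] (Matrix (Fin d) (Fin d) ℂ →L[ℂ] Matrix (Fin d) (Fin d) ℂ) :=
  AlgHom.ofLinearMap
    { toFun := fun A => LinearMap.toContinuousLinearMap (LinearMap.mulLeft ℂ A)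
      map_add' := fun A B => by ext X; simp [add_mul]
      map_smul' := fun c A => by ext X; simp [smul_mul_assoc] }
    (by ext X; simp)
    (fun A B => by ext X; simp [mul_assoc])

/-- Right regular representation as an algebra hom from the opposite algebra. -/
noncomputable def rightRep (d : ℕ) :
    (Matrix (Fin d) (Fin d) ℂ)ᵐᵒᵖ →ₐ[ℂ] (Matrix (Fin d) (Fin d) ℂ →L[ℂ] Matrix (Fin d) (Fin d) ℂ) :=
  AlgHom.ofLinearMap
    { toFun := fun A => LinearMap.toContinuousLinearMap (LinearMap.mulRight ℂ A.unop)
      map_add' := fun A B => by ext X; simp [mul_add]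
      map_smul' := fun c A => by ext X; simp [mul_smul_comm] }
    (by ext X; simp)
    (fun A B => by ext X; simp [mul_assoc])

lemma exp_leftRep (K' : Md) :
    NormedSpace.exp (LinearMap.toContinuousLinearMap (LinearMap.mulLeft ℂ K'))
      = LinearMap.toContinuousLinearMap (LinearMap.mulLeft ℂ (NormedSpace.exp K')) := by
  have hc : Continuous (leftRep d) := (leftRep d).toLinearMap.continuous_of_finiteDimensional
  letI NRM : NormedRing Md := Matrix.linftyOpNormedRing
  letI : NormedAlgebra ℚ Md := Matrix.linftyOpNormedAlgebra
  letI : NormedAlgebra ℂ Md := Matrix.linftyOpNormedAlgebra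
  letI : @CompleteSpace Md NRM.toUniformSpace := FiniteDimensional.complete ℂ Md
  exact (@NormedSpace.map_exp _ _ _ _ _ (clmNR d) (clmNAQ d).toAlgebra _ _ _
    (leftRep d).toRingHom hc K').symm

lemma exp_rightRep (N : Md) :
    NormedSpace.exp (LinearMap.toContinuousLinearMap (LinearMap.mulRight ℂ N))
      = LinearMap.toContinuousLinearMap (LinearMap.mulRight ℂ (NormedSpace.exp N)) := by
  have hc : Continuous (rightRep d) := (rightRep d).toLinearMap.continuous_of_finiteDimensional
  letI NRM : NormedRing Md := Matrix.linftyOpNormedRing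
  letI : NormedAlgebra ℚ Md := Matrix.linftyOpNormedAlgebra
  letI : NormedAlgebra ℂ Md := Matrix.linftyOpNormedAlgebra
  letI : @CompleteSpace Md NRM.toUniformSpace := FiniteDimensional.complete ℂ Md
  have h := @NormedSpace.map_exp _ _ _ _ _ (clmNR d) (clmNAQ d).toAlgebra _ _ _
    (rightRep d).toRingHom hc (MulOpposite.op N)
  rw [NormedSpace.exp_op] at h
  exact h.symm

lemma exp_gen_eq_conj (K' : Md) :
    NormedSpace.exp (LinearMap.toContinuousLinearMap
        (LinearMap.mulLeft ℂ K' + LinearMap.mulRight ℂ K'ᴴ))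
      = conjCLM (NormedSpace.exp K') := by
  have hsplit : LinearMap.toContinuousLinearMap
      (LinearMap.mulLeft ℂ K' + LinearMap.mulRight ℂ K'ᴴ)
      = LinearMap.toContinuousLinearMap (LinearMap.mulLeft ℂ K')
        + LinearMap.toContinuousLinearMap (LinearMap.mulRight ℂ K'ᴴ) := map_add _ _ _
  have hcomm : Commute (LinearMap.toContinuousLinearMap (LinearMap.mulLeft ℂ K'))
      (LinearMap.toContinuousLinearMap (LinearMap.mulRight ℂ K'ᴴ)) := by
    ext X
    simp [ContinuousLinearMap.mul_apply, mul_assoc]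
  have hstar : NormedSpace.exp (K'ᴴ) = (NormedSpace.exp K')ᴴ := by
    have := NormedSpace.star_exp K'
    simpa [Matrix.star_eq_conjTranspose] using this.symm
  rw [hsplit, show NormedSpace.exp (LinearMap.toContinuousLinearMap (LinearMap.mulLeft ℂ K')
      + LinearMap.toContinuousLinearMap (LinearMap.mulRight ℂ K'ᴴ))
      = NormedSpace.exp (LinearMap.toContinuousLinearMap (LinearMap.mulLeft ℂ K'))
        * NormedSpace.exp (LinearMap.toContinuousLinearMap (LinearMap.mulRight ℂ K'ᴴ)) from
      @NormedSpace.exp_add_of_commute _ (clmNR d) (clmNAQ d) (clmCS d) _ _ hcomm, exp_leftRep, exp_rightRep, hstar]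
  ext X
  simp [conjCLM, ContinuousLinearMap.mul_apply, mul_assoc]

section Smem
variable {d : ℕ}
variable (S : Set (Matrix (Fin d) (Fin d) ℂ →L[ℂ] Matrix (Fin d) (Fin d) ℂ))

lemma pow_mem_S (hid : ContinuousLinearMap.id ℂ (Matrix (Fin d) (Fin d) ℂ) ∈ S)
    (hcomp : ∀ Φ ∈ S, ∀ Ψ ∈ S, Φ.comp Ψ ∈ S) {Φ : Matrix (Fin d) (Fin d) ℂ →L[ℂ] Matrix (Fin d) (Fin d) ℂ} (hΦ : Φ ∈ S) :
    ∀ n : ℕ, Φ ^ n ∈ S := by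
  intro n
  induction n with
  | zero => rw [pow_zero, ContinuousLinearMap.one_def]; exact hid
  | succ n ih =>
    rw [pow_succ, ContinuousLinearMap.mul_def]
    exact hcomp _ ih _ hΦ

lemma exp_mem_S (hclosed : IsClosed S)
    (hadd : ∀ Φ ∈ S, ∀ Ψ ∈ S, Φ + Ψ ∈ S)
    (hsmul : ∀ Φ ∈ S, ∀ c : ℝ, 0 ≤ c → (c : ℂ) • Φ ∈ S)
    (hid : ContinuousLinearMap.id ℂ (Matrix (Fin d) (Fin d) ℂ) ∈ S)
    (hcomp : ∀ Φ ∈ S, ∀ Ψ ∈ S, Φ.comp Ψ ∈ S)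
    {Φ : Matrix (Fin d) (Fin d) ℂ →L[ℂ] Matrix (Fin d) (Fin d) ℂ} (hΦ : Φ ∈ S) :
    NormedSpace.exp Φ ∈ S := by
  have hzero : (0 : Matrix (Fin d) (Fin d) ℂ →L[ℂ] Matrix (Fin d) (Fin d) ℂ) ∈ S := by
    have h0 := hsmul Φ hΦ 0 le_rfl
    rwa [Complex.ofReal_zero, zero_smul ℂ Φ] at h0
  have hpart : ∀ m : ℕ, ∑ j ∈ Finset.range m, ((j.factorial : ℂ))⁻¹ • Φ ^ j ∈ S := by
    intro m
    induction m with
    | zero => simpa using hzero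
    | succ m ih =>
      rw [Finset.sum_range_succ]
      refine hadd _ ih _ ?_
      have h1 := hsmul _ (pow_mem_S S hid hcomp hΦ m) (m.factorial : ℝ)⁻¹ (by positivity)
      have h2 : (((m.factorial : ℝ)⁻¹ : ℝ) : ℂ) = ((m.factorial : ℂ))⁻¹ := by push_cast; ring
      rwa [h2] at h1
  exact hclosed.mem_of_tendsto
    (@NormedSpace.exp_series_hasSum_exp' ℂ _ _ _ _ (clmNR d) (clmNA d) (clmCS d) Φ).tendsto_sum_nat
    (Filter.Eventually.of_forall hpart)

end Smem

theorem exp_lindblad_mem_semigroup_aux (d : ℕ)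
    (S : Set (Matrix (Fin d) (Fin d) ℂ →L[ℂ] Matrix (Fin d) (Fin d) ℂ))
    (hclosed : IsClosed S)
    (hadd : ∀ Φ ∈ S, ∀ Ψ ∈ S, Φ + Ψ ∈ S)
    (hsmul : ∀ Φ ∈ S, ∀ c : ℝ, 0 ≤ c → (c : ℂ) • Φ ∈ S)
    (hCP : ∀ Φ : Matrix (Fin d) (Fin d) ℂ →L[ℂ] Matrix (Fin d) (Fin d) ℂ,
      IsCompletelyPositive ⇑Φ → Φ ∈ S)
    (hid : ContinuousLinearMap.id ℂ (Matrix (Fin d) (Fin d) ℂ) ∈ S)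
    (hcomp : ∀ Φ ∈ S, ∀ Ψ ∈ S, Φ.comp Ψ ∈ S) :
    ∀ Φ ∈ S, ∀ (K : Matrix (Fin d) (Fin d) ℂ) (t : ℝ), 0 ≤ t →
      @NormedSpace.exp _ _ _ (@NonUnitalSeminormedRing.toIsTopologicalRing _
        ContinuousLinearMap.toNormedRing.toNonUnitalNormedRing.toNonUnitalSeminormedRing) ((t : ℂ) •
        (LinearMap.toContinuousLinearMap
          (LinearMap.mulLeft ℂ K + LinearMap.mulRight ℂ Kᴴ) + Φ)) ∈ S := by
  intro Φ hΦ K t ht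
  rcases Nat.eq_zero_or_pos d with hd | hd
  · subst hd
    haveI h1 : Subsingleton (Matrix (Fin 0) (Fin 0) ℂ) :=
      ⟨fun a b => by ext i j; exact i.elim0⟩
    haveI h2 : Subsingleton (Matrix (Fin 0) (Fin 0) ℂ →L[ℂ] Matrix (Fin 0) (Fin 0) ℂ) :=
      ⟨fun f g => ContinuousLinearMap.ext fun X => Subsingleton.elim _ _⟩
    have he : NormedSpace.exp ((t : ℂ) •
        (LinearMap.toContinuousLinearMap
          (LinearMap.mulLeft ℂ K + LinearMap.mulRight ℂ Kᴴ) + Φ))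
        = ContinuousLinearMap.id ℂ (Matrix (Fin 0) (Fin 0) ℂ) := Subsingleton.elim _ _
    exact (congrArg (· ∈ S) he).mpr hid
  · haveI : Nonempty (Fin d) := ⟨⟨0, hd⟩⟩
    haveI : Nontrivial (Matrix (Fin d) (Fin d) ℂ) := by
      refine ⟨0, 1, fun h => ?_⟩
      have := congr_fun (congr_fun h ⟨0, hd⟩) ⟨0, hd⟩
      simp [Matrix.one_apply] at this
    set M : Matrix (Fin d) (Fin d) ℂ →L[ℂ] Matrix (Fin d) (Fin d) ℂ :=
      LinearMap.toContinuousLinearMap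
        (LinearMap.mulLeft ℂ K + LinearMap.mulRight ℂ Kᴴ) with hM
    rw [smul_add]
    refine hclosed.mem_of_tendsto (@trotter_formula _ (clmNR d) (clmNA d) (clmCS d) (clmNOC d) ((t:ℂ) • M) ((t:ℂ) • Φ)) ?_
    filter_upwards [Filter.eventually_ge_atTop 1] with m hm
    have hm0 : (0:ℝ) < (m:ℝ) := by exact_mod_cast hm
    have hc0 : (0:ℝ) ≤ t / m := by positivity
    have hcast : ((m:ℂ))⁻¹ * (t:ℂ) = (((t/m : ℝ)):ℂ) := by push_cast; ring
    have hBmem : NormedSpace.exp (((m:ℂ))⁻¹ • ((t:ℂ) • Φ)) ∈ S := by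
      rw [smul_smul, hcast]
      exact exp_mem_S S hclosed hadd hsmul hid hcomp (hsmul Φ hΦ (t/m) hc0)
    have hAmem : NormedSpace.exp (((m:ℂ))⁻¹ • ((t:ℂ) • M)) ∈ S := by
      have hA : ((m:ℂ))⁻¹ • ((t:ℂ) • M)
          = LinearMap.toContinuousLinearMap
              (LinearMap.mulLeft ℂ ((((t/m : ℝ)):ℂ) • K)
                + LinearMap.mulRight ℂ (((((t/m : ℝ)):ℂ) • K)ᴴ)) := by
        rw [smul_smul, hcast, hM]
        have hKH : (((((t/m : ℝ)):ℂ) • K)ᴴ) = (((t/m : ℝ)):ℂ) • Kᴴ := by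
          rw [Matrix.conjTranspose_smul]
          congr 1
          exact Complex.conj_ofReal _
        rw [hKH]
        ext X i j
        simp [smul_add, smul_mul_assoc, mul_smul_comm]
      rw [hA, exp_gen_eq_conj]
      exact hCP _ (conjCLM_isCP _)
    exact pow_mem_S S hid hcomp
      (by exact hcomp _ hAmem _ hBmem) m

end LinftyAux

attribute [local instance] Matrix.frobeniusSeminormedAddCommGroup
  Matrix.frobeniusNormedAddCommGroup Matrix.frobeniusNormedSpace

/-- Let `S` be a closed convex cone of linear maps on `ℂ^{d×d}` which contains all completely
positive maps, contains the identity map, and is closed under composition. Then for every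
`Φ ∈ S`, every `K ∈ ℂ^{d×d}`, and every `t ≥ 0`, the map `exp (t L)` belongs to `S`, where
`L X = K X + X Kᴴ + Φ X`. -/
theorem exp_lindblad_mem_semigroup (d : ℕ)
    (S : Set (Matrix (Fin d) (Fin d) ℂ →L[ℂ] Matrix (Fin d) (Fin d) ℂ))
    (hclosed : IsClosed S)
    (hadd : ∀ Φ ∈ S, ∀ Ψ ∈ S, Φ + Ψ ∈ S)
    (hsmul : ∀ Φ ∈ S, ∀ c : ℝ, 0 ≤ c → (c : ℂ) • Φ ∈ S)
    (hCP : ∀ Φ : Matrix (Fin d) (Fin d) ℂ →L[ℂ] Matrix (Fin d) (Fin d) ℂ,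
      IsCompletelyPositive ⇑Φ → Φ ∈ S)
    (hid : ContinuousLinearMap.id ℂ (Matrix (Fin d) (Fin d) ℂ) ∈ S)
    (hcomp : ∀ Φ ∈ S, ∀ Ψ ∈ S, Φ.comp Ψ ∈ S) :
    ∀ Φ ∈ S, ∀ (K : Matrix (Fin d) (Fin d) ℂ) (t : ℝ), 0 ≤ t →
      @NormedSpace.exp _ _ _ (@NonUnitalSeminormedRing.toIsTopologicalRing _
        ContinuousLinearMap.toNormedRing.toNonUnitalNormedRing.toNonUnitalSeminormedRing) ((t : ℂ) •
        (LinearMap.toContinuousLinearMap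
          (LinearMap.mulLeft ℂ K + LinearMap.mulRight ℂ Kᴴ) + Φ)) ∈ S := by
  intro Φ hΦ K t ht
  exact exp_lindblad_mem_semigroup_aux d S hclosed hadd hsmul hCP hid hcomp Φ hΦ K t ht
end

section
/- A Hermitian-preserving linear map Φ on ℂ^{d×d} satisfies: if there exists K' ∈ ℂ^{d×d} such that Φ − K'(·) − (·)(K')† is completely positive, then e^{t(K(·)+(·)K†+Φ)} is completely positive for all K ∈ ℂ^{d×d} and all t ≥ 0. -/
open scoped Matrix ComplexOrder

attribute [local instance] Matrix.frobeniusSeminormedAddCommGroup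
  Matrix.frobeniusNormedAddCommGroup Matrix.frobeniusNormedSpace

instance instIsTopologicalRingMatrixCLM (d : ℕ) :
    IsTopologicalRing (Matrix (Fin d) (Fin d) ℂ →L[ℂ] Matrix (Fin d) (Fin d) ℂ) := by
  exact @NonUnitalSeminormedRing.toIsTopologicalRing _
    (@ContinuousLinearMap.toSeminormedRing ℂ (Matrix (Fin d) (Fin d) ℂ) _ _ _).toNonUnitalSeminormedRing

set_option linter.unusedSectionVars false
section TrotterGeneral

open NormedSpace Filter

variable {𝔸 : Type*} [NormedRing 𝔸] [NormOneClass 𝔸] [NormedAlgebra ℂ 𝔸] [CompleteSpace 𝔸]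

private lemma my_norm_pow_le (a : 𝔸) (n : ℕ) : ‖a ^ n‖ ≤ ‖a‖ ^ n := by
  induction n with
  | zero => simp
  | succ k ih =>
    rw [pow_succ, pow_succ]
    calc ‖a ^ k * a‖ ≤ ‖a ^ k‖ * ‖a‖ := norm_mul_le _ _
      _ ≤ ‖a‖ ^ k * ‖a‖ := by gcongr

private lemma norm_coeff_smul (k : ℕ) (y : 𝔸) :
    ‖((k.factorial : ℂ))⁻¹ • y‖ = ‖y‖ / (k.factorial : ℝ) := by
  rw [norm_smul, norm_inv, Complex.norm_natCast, div_eq_inv_mul]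

private lemma summable_norm_exp_aux (x : 𝔸) :
    Summable (fun k : ℕ => ‖x‖ ^ k / (k.factorial : ℝ)) :=
  NormedSpace.norm_expSeries_div_summable ‖x‖ |>.congr (by
    intro k
    rw [Real.norm_eq_abs, abs_of_nonneg (by positivity)])

private lemma tsum_norm_exp_aux (x : 𝔸) :
    ∑' k : ℕ, ‖x‖ ^ k / (k.factorial : ℝ) = Real.exp ‖x‖ := by
  rw [Real.exp_eq_exp_ℝ, NormedSpace.exp_eq_tsum_div]

private lemma norm_term_le (x : 𝔸) (k : ℕ) :
    ‖((k.factorial : ℂ))⁻¹ • x ^ k‖ ≤ ‖x‖ ^ k / (k.factorial : ℝ) := by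
  rw [norm_coeff_smul]
  gcongr
  exact my_norm_pow_le x k

private lemma my_norm_exp_le (x : 𝔸) : ‖exp x‖ ≤ Real.exp ‖x‖ := by
  rw [exp_eq_tsum (𝕂 := ℂ)]
  refine le_trans (norm_tsum_le_tsum_norm (NormedSpace.norm_expSeries_summable' x)) ?_
  rw [← tsum_norm_exp_aux x]
  exact Summable.tsum_le_tsum (norm_term_le x) (NormedSpace.norm_expSeries_summable' x)
    (summable_norm_exp_aux x)

/-- `‖exp x - 1‖ ≤ ‖x‖ * e^{‖x‖}`. -/
private lemma norm_exp_sub_one_le (x : 𝔸) : ‖exp x - 1‖ ≤ ‖x‖ * Real.exp ‖x‖ := by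
  have hsum : Summable fun k : ℕ => ((k.factorial : ℂ))⁻¹ • x ^ k :=
    NormedSpace.expSeries_summable' x
  have h0 : exp x = 1 + ∑' k : ℕ, (((k + 1).factorial : ℂ))⁻¹ • x ^ (k + 1) := by
    simp only [exp_eq_tsum (𝕂 := ℂ)]
    rw [Summable.tsum_eq_zero_add hsum]
    simp
  rw [h0, add_sub_cancel_left]
  have hnorm1 : Summable fun k : ℕ => ‖(((k + 1).factorial : ℂ))⁻¹ • x ^ (k + 1)‖ :=
    (summable_nat_add_iff (f := fun k : ℕ => ‖((k.factorial : ℂ))⁻¹ • x ^ k‖) 1).2 (NormedSpace.norm_expSeries_summable' x)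
  refine le_trans (norm_tsum_le_tsum_norm hnorm1) ?_
  have hbound : ∀ k : ℕ, ‖(((k + 1).factorial : ℂ))⁻¹ • x ^ (k + 1)‖ ≤
      ‖x‖ * (‖x‖ ^ k / (k.factorial : ℝ)) := by
    intro k
    refine le_trans (norm_term_le x (k + 1)) ?_
    rw [pow_succ, mul_comm (‖x‖ ^ k) ‖x‖, mul_div_assoc]
    have hf : (k.factorial : ℝ) ≤ ((k+1).factorial : ℝ) := by
      exact_mod_cast Nat.factorial_le (Nat.le_succ k)
    gcongr
  refine le_trans (Summable.tsum_le_tsum hbound hnorm1 ((summable_norm_exp_aux x).mul_left ‖x‖)) ?_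
  rw [tsum_mul_left, tsum_norm_exp_aux]

/-- `‖exp x - 1 - x‖ ≤ ‖x‖² * e^{‖x‖}`. -/
private lemma norm_exp_sub_one_sub_le (x : 𝔸) :
    ‖exp x - 1 - x‖ ≤ ‖x‖ ^ 2 * Real.exp ‖x‖ := by
  have hsum : Summable fun k : ℕ => ((k.factorial : ℂ))⁻¹ • x ^ k :=
    NormedSpace.expSeries_summable' x
  have hsum1 : Summable fun k : ℕ => (((k + 1).factorial : ℂ))⁻¹ • x ^ (k + 1) :=
    (summable_nat_add_iff (f := fun k : ℕ => ((k.factorial : ℂ))⁻¹ • x ^ k) 1).2 hsum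
  have h0 : exp x = 1 + (x + ∑' k : ℕ, (((k + 2).factorial : ℂ))⁻¹ • x ^ (k + 2)) := by
    simp only [exp_eq_tsum (𝕂 := ℂ)]
    rw [Summable.tsum_eq_zero_add hsum, Summable.tsum_eq_zero_add hsum1]
    norm_num
  rw [h0]
  have : 1 + (x + ∑' k : ℕ, (((k + 2).factorial : ℂ))⁻¹ • x ^ (k + 2)) - 1 - x =
      ∑' k : ℕ, (((k + 2).factorial : ℂ))⁻¹ • x ^ (k + 2) := by abel
  rw [this]
  have hnorm2 : Summable fun k : ℕ => ‖(((k + 2).factorial : ℂ))⁻¹ • x ^ (k + 2)‖ :=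
    (summable_nat_add_iff (f := fun k : ℕ => ‖((k.factorial : ℂ))⁻¹ • x ^ k‖) 2).2 (NormedSpace.norm_expSeries_summable' x)
  refine le_trans (norm_tsum_le_tsum_norm hnorm2) ?_
  have hbound : ∀ k : ℕ, ‖(((k + 2).factorial : ℂ))⁻¹ • x ^ (k + 2)‖ ≤
      ‖x‖ ^ 2 * (‖x‖ ^ k / (k.factorial : ℝ)) := by
    intro k
    refine le_trans (norm_term_le x (k + 2)) ?_
    rw [pow_add, mul_comm (‖x‖ ^ k) (‖x‖ ^ 2), mul_div_assoc]
    have hf : (k.factorial : ℝ) ≤ ((k+2).factorial : ℝ) := by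
      exact_mod_cast Nat.factorial_le (by omega : k ≤ k + 2)
    gcongr
  refine le_trans (Summable.tsum_le_tsum hbound hnorm2
    ((summable_norm_exp_aux x).mul_left _)) ?_
  rw [tsum_mul_left, tsum_norm_exp_aux]

/-- Bound on the defect of `exp` multiplicativity. -/
private lemma norm_exp_add_sub_mul_le (x y : 𝔸) :
    ‖exp (x + y) - exp x * exp y‖ ≤
      ‖x + y‖ ^ 2 * Real.exp ‖x + y‖ + ‖x‖ ^ 2 * Real.exp ‖x‖ * Real.exp ‖y‖
        + ‖x‖ * (‖y‖ * Real.exp ‖y‖) + ‖y‖ ^ 2 * Real.exp ‖y‖ := by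
  have hid : exp (x + y) - exp x * exp y =
      (exp (x + y) - 1 - (x + y)) - ((exp x - 1 - x) * exp y)
        - (x * (exp y - 1)) - (exp y - 1 - y) := by
    noncomm_ring
  rw [hid]
  refine le_trans (norm_sub_le _ _) ?_
  refine add_le_add (le_trans (norm_sub_le _ _) (add_le_add (le_trans (norm_sub_le _ _) ?_) ?_)) ?_
  · exact add_le_add (norm_exp_sub_one_sub_le (x + y))
      (le_trans (norm_mul_le _ _)
        (mul_le_mul (norm_exp_sub_one_sub_le x) (my_norm_exp_le y) (norm_nonneg _)
          (by positivity)))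
  · exact le_trans (norm_mul_le _ _)
      (mul_le_mul_of_nonneg_left (norm_exp_sub_one_le y) (norm_nonneg x))
  · exact norm_exp_sub_one_sub_le y

/-- Telescoping bound for powers. -/
private lemma norm_pow_sub_pow_le (u v : 𝔸) (C : ℝ) (hC : 1 ≤ C)
    (hu : ‖u‖ ≤ C) (hv : ‖v‖ ≤ C) (n : ℕ) :
    ‖u ^ n - v ^ n‖ ≤ n * C ^ n * ‖u - v‖ := by
  induction n with
  | zero => simp
  | succ k ih =>
    push_cast
    have key : u ^ (k + 1) - v ^ (k + 1) = u * (u ^ k - v ^ k) + (u - v) * v ^ k := by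
      rw [pow_succ' u, pow_succ' v]
      noncomm_ring
    have hCk : C ^ k ≤ C ^ (k + 1) := pow_le_pow_right₀ hC (Nat.le_succ k)
    calc ‖u ^ (k + 1) - v ^ (k + 1)‖ ≤ ‖u * (u ^ k - v ^ k)‖ + ‖(u - v) * v ^ k‖ := by
          rw [key]; exact norm_add_le _ _
      _ ≤ C * (k * C ^ k * ‖u - v‖) + ‖u - v‖ * C ^ k := by
          refine add_le_add (le_trans (norm_mul_le _ _) ?_) (le_trans (norm_mul_le _ _) ?_)
          · exact mul_le_mul hu ih (norm_nonneg _) (by linarith)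
          · exact mul_le_mul_of_nonneg_left
              (le_trans (my_norm_pow_le v k) (pow_le_pow_left₀ (norm_nonneg v) hv k))
              (norm_nonneg _)
      _ ≤ ((k : ℝ) + 1) * C ^ (k + 1) * ‖u - v‖ := by
          have h1 : C * ((k : ℝ) * C ^ k * ‖u - v‖) = (k : ℝ) * C ^ (k + 1) * ‖u - v‖ := by ring
          have h2 : ‖u - v‖ * C ^ k ≤ C ^ (k + 1) * ‖u - v‖ := by
            rw [mul_comm]; exact mul_le_mul_of_nonneg_right hCk (norm_nonneg _)
          rw [h1]
          nlinarith [norm_nonneg (u - v), pow_nonneg (le_trans zero_le_one hC) (k + 1)]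

/-- The Lie–Trotter product formula in a Banach algebra. -/
private lemma trotter (a b : 𝔸) :
    Filter.Tendsto
      (fun n : ℕ => (exp ((n : ℂ)⁻¹ • a) * exp ((n : ℂ)⁻¹ • b)) ^ n)
      Filter.atTop (nhds (exp (a + b))) := by
  set r : ℝ := ‖a‖ + ‖b‖ with hr
  have hr0 : 0 ≤ r := by positivity
  set Etot : ℝ := 3 * Real.exp r + Real.exp r * Real.exp r with hEtot
  rw [tendsto_iff_norm_sub_tendsto_zero]
  refine squeeze_zero' (Filter.Eventually.of_forall (fun n => norm_nonneg _)) ?_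
    (tendsto_const_div_atTop_nhds_zero_nat (r ^ 2 * Etot * Real.exp r))
  show ∀ᶠ n : ℕ in Filter.atTop,
      ‖(exp ((n : ℂ)⁻¹ • a) * exp ((n : ℂ)⁻¹ • b)) ^ n - exp (a + b)‖ ≤
        r ^ 2 * Etot * Real.exp r / n
  filter_upwards [Filter.eventually_ge_atTop 1] with n hn
  have hn0 : (n : ℝ) ≠ 0 := by positivity
  have hn1 : (1 : ℝ) ≤ (n : ℝ) := by exact_mod_cast hn
  set x : 𝔸 := (n : ℂ)⁻¹ • a with hx
  set y : 𝔸 := (n : ℂ)⁻¹ • b with hy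
  set s : ℝ := r / n with hs
  have hs0 : 0 ≤ s := by positivity
  have hsr : s ≤ r := by
    rw [hs, div_le_iff₀ (by positivity)]
    nlinarith
  have hninv : ‖((n : ℂ))⁻¹‖ = (n : ℝ)⁻¹ := by
    rw [norm_inv, Complex.norm_natCast]
  have hxa : ‖x‖ = ‖a‖ / n := by rw [hx, norm_smul, hninv, inv_mul_eq_div]
  have hyb : ‖y‖ = ‖b‖ / n := by rw [hy, norm_smul, hninv, inv_mul_eq_div]
  have hxys : ‖x‖ + ‖y‖ = s := by rw [hxa, hyb, hs, hr, add_div]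
  have hxn : ‖x‖ ≤ s := by
    rw [hxa, hs]
    gcongr
    rw [hr]; linarith [norm_nonneg b]
  have hyn : ‖y‖ ≤ s := by
    rw [hyb, hs]
    gcongr
    rw [hr]; linarith [norm_nonneg a]
  have hxyn : ‖x + y‖ ≤ s := le_trans (norm_add_le x y) (le_of_eq hxys)
  have hxy : x + y = (n : ℂ)⁻¹ • (a + b) := by rw [hx, hy, smul_add]
  set u : 𝔸 := exp (x + y) with hu
  set v : 𝔸 := exp x * exp y with hv
  have hun : u ^ n = exp (a + b) := by
    letI : NormedAlgebra ℚ 𝔸 := NormedAlgebra.restrictScalars ℚ ℂ 𝔸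
    rw [hu, ← NormedSpace.exp_nsmul]
    congr 1
    rw [hxy, ← Nat.cast_smul_eq_nsmul ℂ n, smul_smul, mul_inv_cancel₀ (by exact_mod_cast hn0),
      one_smul]
  set C : ℝ := Real.exp s with hC
  have hC1 : 1 ≤ C := Real.one_le_exp hs0
  have hCu : ‖u‖ ≤ C := le_trans (my_norm_exp_le _) (Real.exp_le_exp.2 hxyn)
  have hCv : ‖v‖ ≤ C := by
    refine le_trans (norm_mul_le _ _) ?_
    refine le_trans (mul_le_mul (my_norm_exp_le x) (my_norm_exp_le y)
      (norm_nonneg _) (Real.exp_pos _).le) ?_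
    rw [← Real.exp_add, hC]
    exact Real.exp_le_exp.2 (le_of_eq hxys)
  have hCn : C ^ n = Real.exp r := by
    rw [hC, ← Real.exp_nat_mul, hs, mul_div_cancel₀ _ hn0]
  -- the local defect bound
  have hes : Real.exp s ≤ Real.exp r := Real.exp_le_exp.2 hsr
  have huv : ‖u - v‖ ≤ s ^ 2 * Etot := by
    refine le_trans (norm_exp_add_sub_mul_le x y) ?_
    have t1 : ‖x + y‖ ^ 2 * Real.exp ‖x + y‖ ≤ s ^ 2 * Real.exp r :=
      mul_le_mul (by gcongr) (Real.exp_le_exp.2 (hxyn.trans hsr))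
        (Real.exp_pos _).le (by positivity)
    have t2 : ‖x‖ ^ 2 * Real.exp ‖x‖ * Real.exp ‖y‖ ≤ s ^ 2 * (Real.exp r * Real.exp r) := by
      rw [mul_assoc]
      exact mul_le_mul (by gcongr)
        (mul_le_mul (Real.exp_le_exp.2 (hxn.trans hsr)) (Real.exp_le_exp.2 (hyn.trans hsr))
          (Real.exp_pos _).le (Real.exp_pos _).le)
        (by positivity) (by positivity)
    have t3 : ‖x‖ * (‖y‖ * Real.exp ‖y‖) ≤ s ^ 2 * Real.exp r := by
      rw [pow_two, mul_assoc]
      exact mul_le_mul hxn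
        (mul_le_mul hyn (Real.exp_le_exp.2 (hyn.trans hsr)) (Real.exp_pos _).le hs0)
        (by positivity) hs0
    have t4 : ‖y‖ ^ 2 * Real.exp ‖y‖ ≤ s ^ 2 * Real.exp r :=
      mul_le_mul (by gcongr) (Real.exp_le_exp.2 (hyn.trans hsr))
        (Real.exp_pos _).le (by positivity)
    rw [hEtot]
    nlinarith
  have main : ‖(exp x * exp y) ^ n - exp (a + b)‖ ≤
      r ^ 2 * Etot * Real.exp r / n := by
    rw [← hun, ← hv, norm_sub_rev]
    refine le_trans (norm_pow_sub_pow_le u v C hC1 hCu hCv n) ?_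
    refine le_trans (mul_le_mul_of_nonneg_left huv (by positivity)) ?_
    rw [hCn, hs, div_pow]
    refine le_of_eq ?_
    field_simp
  exact main

end TrotterGeneral


/-- The Frobenius topology on square matrices. -/
noncomputable abbrev matTopFrob (d : ℕ) : TopologicalSpace (Matrix (Fin d) (Fin d) ℂ) :=
  (Matrix.frobeniusSeminormedAddCommGroup (α := ℂ)).toUniformSpace.toTopologicalSpace

/-- The Frobenius uniformity on square matrices. -/
noncomputable abbrev matUnifFrob (d : ℕ) : UniformSpace (Matrix (Fin d) (Fin d) ℂ) :=
  (Matrix.frobeniusSeminormedAddCommGroup (α := ℂ)).toUniformSpace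

section CPAux

attribute [local instance high] matTopFrob matUnifFrob

open Filter

attribute [local instance] Matrix.frobeniusNormedRing Matrix.frobeniusNormedAlgebra

variable {d : ℕ}

local notation "Mat" => Matrix (Fin d) (Fin d) ℂ

private lemma isClosed_nonneg_complex : IsClosed {z : ℂ | 0 ≤ z} := by
  have : {z : ℂ | 0 ≤ z} = Complex.re ⁻¹' Set.Ici 0 ∩ Complex.im ⁻¹' {0} := by
    ext z
    simp only [Set.mem_setOf_eq, Set.mem_inter_iff, Set.mem_preimage, Set.mem_Ici,
      Set.mem_singleton_iff, Complex.le_def, Complex.zero_re, Complex.zero_im]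
    tauto
  rw [this]
  exact (isClosed_Ici.preimage Complex.continuous_re).inter
    (isClosed_singleton.preimage Complex.continuous_im)

private lemma posSemidef_of_tendsto {m : Type*} [Fintype m] {ι : Type*} {l : Filter ι} [l.NeBot]
    {F : ι → Matrix m m ℂ} {A : Matrix m m ℂ}
    (hconv : ∀ p q, Tendsto (fun i => F i p q) l (nhds (A p q)))
    (hF : ∀ i, (F i).PosSemidef) : A.PosSemidef := by
  refine Matrix.PosSemidef.of_dotProduct_mulVec_nonneg ?_ ?_
  · ext p q
    have h1 : Tendsto (fun i => star ((F i) q p)) l (nhds (star (A q p))) :=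
      (hconv q p).star
    have h2 : (fun i => star ((F i) q p)) = fun i => (F i) p q := by
      funext i
      exact (hF i).1.apply p q
    rw [h2] at h1
    have := tendsto_nhds_unique h1 (hconv p q)
    simpa [Matrix.conjTranspose_apply] using this
  · intro x
    have hdp : Tendsto (fun i => dotProduct (star x) (F i *ᵥ x)) l
        (nhds (dotProduct (star x) (A *ᵥ x))) := by
      simp only [dotProduct, Matrix.mulVec]
      exact tendsto_finset_sum _ fun p _ =>
        (tendsto_const_nhds.mul (tendsto_finset_sum _ fun q _ =>
          (hconv p q).mul tendsto_const_nhds))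
    exact isClosed_nonneg_complex.mem_of_tendsto hdp
      (Filter.Eventually.of_forall fun i => (hF i).dotProduct_mulVec_nonneg x)

private lemma norm_entry_le_frobenius {m n : Type*} [Fintype m] [Fintype n]
    (M : Matrix m n ℂ) (p : m) (q : n) : ‖M p q‖ ≤ ‖M‖ := by
  have key : ‖M p q‖₊ ≤ ‖M‖₊ := by
    rw [Matrix.frobenius_nnnorm_def]
    have h1 : ‖M p q‖₊ ^ (2 : ℝ) ≤ ∑ i, ∑ j, ‖M i j‖₊ ^ (2 : ℝ) :=
      le_trans (Finset.single_le_sum (f := fun j => ‖M p j‖₊ ^ (2 : ℝ))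
          (fun _ _ => zero_le) (Finset.mem_univ q))
        (Finset.single_le_sum (f := fun i => ∑ j, ‖M i j‖₊ ^ (2 : ℝ))
          (fun _ _ => zero_le) (Finset.mem_univ p))
    calc ‖M p q‖₊ = (‖M p q‖₊ ^ (2 : ℝ)) ^ (1 / 2 : ℝ) := by
          rw [← NNReal.rpow_mul]; norm_num
      _ ≤ (∑ i, ∑ j, ‖M i j‖₊ ^ (2 : ℝ)) ^ (1 / 2 : ℝ) :=
          NNReal.rpow_le_rpow h1 (by norm_num)
  exact key

private lemma cp_id : IsCompletelyPositive (fun X : Mat => X) := by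
  intro n A hA
  have : idTensor (k := Fin n) (fun X : Mat => X) A = A := by
    ext p q
    simp [idTensor]
  rwa [this]

private lemma cp_comp {f g : Mat → Mat} (hf : IsCompletelyPositive f)
    (hg : IsCompletelyPositive g) : IsCompletelyPositive (fun X => f (g X)) :=
  fun n A hA => hf n _ (hg n A hA)

private lemma cp_zero : IsCompletelyPositive (fun _ : Mat => (0 : Mat)) := by
  intro n A _
  have : idTensor (k := Fin n) (fun _ : Mat => (0 : Mat)) A = 0 := by
    ext p q
    simp [idTensor]
  rw [this]
  exact Matrix.PosSemidef.zero

private lemma cp_add {f g : Mat → Mat} (hf : IsCompletelyPositive f)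
    (hg : IsCompletelyPositive g) : IsCompletelyPositive (fun X => f X + g X) := by
  intro n A hA
  have : idTensor (k := Fin n) (fun X => f X + g X) A =
      idTensor (k := Fin n) f A + idTensor (k := Fin n) g A := by
    ext p q
    simp [idTensor]
  rw [this]
  exact (hf n A hA).add (hg n A hA)

private lemma cp_smul {f : Mat → Mat} (c : ℝ) (hc : 0 ≤ c) (hf : IsCompletelyPositive f) :
    IsCompletelyPositive (fun X => (c : ℂ) • f X) := by
  intro n A hA
  have hit : idTensor (k := Fin n) (fun X => (c : ℂ) • f X) A =
      (c : ℂ) • idTensor (k := Fin n) f A := by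
    ext p q
    simp [idTensor]
  rw [hit]
  obtain ⟨hH, hv⟩ := Matrix.posSemidef_iff_dotProduct_mulVec.mp (hf n A hA)
  refine Matrix.PosSemidef.of_dotProduct_mulVec_nonneg ?_ ?_
  · show (_ • _)ᴴ = _
    rw [Matrix.conjTranspose_smul, Complex.star_def, Complex.conj_ofReal]
    unfold Matrix.IsHermitian at hH
    rw [hH]
  · intro x
    rw [Matrix.smul_mulVec, dotProduct_smul, smul_eq_mul]
    exact mul_nonneg (by exact_mod_cast hc) (hv x)

private lemma cp_sum {ι : Type*} (s : Finset ι) (f : ι → Mat → Mat)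
    (h : ∀ i ∈ s, IsCompletelyPositive (f i)) :
    IsCompletelyPositive (fun X => ∑ i ∈ s, f i X) := by
  classical
  induction s using Finset.induction_on with
  | empty => simpa using cp_zero
  | @insert j s' hns ih =>
    have hj : IsCompletelyPositive (f j) := h j (Finset.mem_insert_self j s')
    have hs' : IsCompletelyPositive (fun X => ∑ i ∈ s', f i X) :=
      ih fun i hi => h i (Finset.mem_insert_of_mem hi)
    have : (fun X => ∑ i ∈ insert j s', f i X) =
        fun X => f j X + ∑ i ∈ s', f i X := by
      funext X
      rw [Finset.sum_insert hns]
    rw [this]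
    exact cp_add hj hs'

private lemma idTensor_conj {n : ℕ} (N : Mat) (A : Matrix (Fin n × Fin d) (Fin n × Fin d) ℂ) :
    idTensor (k := Fin n) (fun X => N * X * Nᴴ) A =
      (Matrix.of fun p q : Fin n × Fin d => if p.1 = q.1 then N p.2 q.2 else 0) * A *
      (Matrix.of fun p q : Fin n × Fin d => if p.1 = q.1 then N p.2 q.2 else 0)ᴴ := by
  ext p q
  obtain ⟨p1, p2⟩ := p
  obtain ⟨q1, q2⟩ := q
  simp only [idTensor, Matrix.of_apply, Matrix.mul_apply, Matrix.conjTranspose_apply,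
    Fintype.sum_prod_type, ite_mul, mul_ite, zero_mul, mul_zero, apply_ite (star : ℂ → ℂ), star_zero]
  simp only [Finset.sum_ite_irrel, Finset.sum_const_zero, Finset.sum_ite_eq,
    Finset.mem_univ, if_true]

private lemma cp_conj (N : Mat) : IsCompletelyPositive (fun X => N * X * Nᴴ) := by
  intro n A hA
  rw [idTensor_conj]
  exact hA.mul_mul_conjTranspose_same _

private lemma cp_of_tendsto {ι : Type*} {l : Filter ι} [l.NeBot]
    {S : ι → (Mat →L[ℂ] Mat)} {T : Mat →L[ℂ] Mat}
    (h : Tendsto S l (nhds T)) (hS : ∀ i, IsCompletelyPositive ⇑(S i)) :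
    IsCompletelyPositive ⇑T := by
  intro n A hA
  have hXconv : ∀ X : Mat, Tendsto (fun i => (S i) X) l (nhds (T X)) := by
    intro X
    rw [tendsto_iff_norm_sub_tendsto_zero]
    have hb : ∀ i, ‖(S i) X - T X‖ ≤ ‖S i - T‖ * ‖X‖ := fun i => by
      calc ‖(S i) X - T X‖ = ‖(S i - T) X‖ := by rw [ContinuousLinearMap.sub_apply]
        _ ≤ ‖S i - T‖ * ‖X‖ := (S i - T).le_opNorm X
    have hnorm : Tendsto (fun i => ‖S i - T‖ * ‖X‖) l (nhds 0) := by
      have h0 := (tendsto_iff_norm_sub_tendsto_zero.1 h).mul_const ‖X‖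
      simpa using h0
    exact squeeze_zero (fun i => norm_nonneg _) hb hnorm
  refine posSemidef_of_tendsto (l := l) (F := fun i => idTensor (k := Fin n) ⇑(S i) A) ?_
    (fun i => hS i n A hA)
  intro p q
  show Tendsto (fun i => (S i) _ p.2 q.2) l (nhds (T _ p.2 q.2))
  set X : Mat := Matrix.of fun s t => A (p.1, s) (q.1, t) with hX
  rw [tendsto_iff_norm_sub_tendsto_zero]
  have hb : ∀ i, ‖(S i) X p.2 q.2 - T X p.2 q.2‖ ≤ ‖(S i) X - T X‖ := fun i => by
    have : (S i) X p.2 q.2 - T X p.2 q.2 = ((S i) X - T X) p.2 q.2 := by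
      simp [Matrix.sub_apply]
    rw [this]
    exact norm_entry_le_frobenius _ _ _
  exact squeeze_zero (fun i => norm_nonneg _) hb
    (tendsto_iff_norm_sub_tendsto_zero.1 (hXconv X))

private lemma cp_pow {T : Mat →L[ℂ] Mat} (hT : IsCompletelyPositive ⇑T) (k : ℕ) :
    IsCompletelyPositive ⇑(T ^ k) := by
  induction k with
  | zero =>
    have : ⇑(T ^ 0) = fun X : Mat => X := by
      funext X
      simp [pow_zero]
    rw [this]
    exact cp_id
  | succ j ih =>
    have : ⇑(T ^ (j + 1)) = fun X : Mat => (T ^ j) (T X) := by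
      funext X
      rw [pow_succ]
      rfl
    rw [this]
    exact cp_comp ih hT

private lemma cp_exp {T : Mat →L[ℂ] Mat} (hT : IsCompletelyPositive ⇑T) (t : ℝ) (ht : 0 ≤ t) :
    IsCompletelyPositive ⇑(NormedSpace.exp ((t : ℂ) • T)) := by
  have hsum : HasSum (fun k : ℕ => ((k.factorial : ℂ))⁻¹ • ((t : ℂ) • T) ^ k)
      (NormedSpace.exp ((t : ℂ) • T)) :=
    NormedSpace.exp_series_hasSum_exp' _
  have hTs : IsCompletelyPositive ⇑((t : ℂ) • T) := by
    have : ⇑((t : ℂ) • T) = fun X => (t : ℂ) • T X := rfl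
    rw [this]
    exact cp_smul t ht hT
  refine cp_of_tendsto (l := Filter.atTop)
    (S := fun s : Finset ℕ => ∑ k ∈ s, ((k.factorial : ℂ))⁻¹ • ((t : ℂ) • T) ^ k) hsum ?_
  intro s
  have : ⇑(∑ k ∈ s, ((k.factorial : ℂ))⁻¹ • ((t : ℂ) • T) ^ k) =
      fun X => ∑ k ∈ s, ((((k.factorial : ℝ))⁻¹ : ℝ) : ℂ) • ((((t : ℂ) • T) ^ k) X) := by
    funext X
    rw [ContinuousLinearMap.sum_apply]
    refine Finset.sum_congr rfl fun k _ => ?_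
    rw [ContinuousLinearMap.smul_apply]
    norm_num
  rw [this]
  exact cp_sum s _ fun k _ => cp_smul _ (by positivity) (cp_pow hTs k)

private lemma mulLeftCLM_pow (A : Mat) (k : ℕ) : ∀ X : Mat,
    ((LinearMap.toContinuousLinearMap (LinearMap.mulLeft ℂ A)) ^ k) X = A ^ k * X := by
  induction k with
  | zero => intro X; simp
  | succ j ih =>
    intro X
    rw [pow_succ]
    have : ((LinearMap.toContinuousLinearMap (LinearMap.mulLeft ℂ A)) ^ j *
        LinearMap.toContinuousLinearMap (LinearMap.mulLeft ℂ A)) X =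
        ((LinearMap.toContinuousLinearMap (LinearMap.mulLeft ℂ A)) ^ j) (A * X) := by
      rfl
    rw [this, ih (A * X), ← mul_assoc, ← pow_succ]

private lemma mulRightCLM_pow (B : Mat) (k : ℕ) : ∀ X : Mat,
    ((LinearMap.toContinuousLinearMap (LinearMap.mulRight ℂ B)) ^ k) X = X * B ^ k := by
  induction k with
  | zero => intro X; simp
  | succ j ih =>
    intro X
    rw [pow_succ]
    have : ((LinearMap.toContinuousLinearMap (LinearMap.mulRight ℂ B)) ^ j *
        LinearMap.toContinuousLinearMap (LinearMap.mulRight ℂ B)) X =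
        ((LinearMap.toContinuousLinearMap (LinearMap.mulRight ℂ B)) ^ j) (X * B) := by
      rfl
    rw [this, ih (X * B), mul_assoc, ← pow_succ']

private lemma exp_mulLeftCLM (A : Mat) (X : Mat) :
    (NormedSpace.exp (LinearMap.toContinuousLinearMap (LinearMap.mulLeft ℂ A))) X =
      NormedSpace.exp A * X := by
  have h1 : HasSum (fun k : ℕ => ((k.factorial : ℂ))⁻¹ •
        ((LinearMap.toContinuousLinearMap (LinearMap.mulLeft ℂ A)) ^ k))
      (NormedSpace.exp (LinearMap.toContinuousLinearMap (LinearMap.mulLeft ℂ A))) :=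
    NormedSpace.exp_series_hasSum_exp' _
  have h2 := h1.mapL (ContinuousLinearMap.apply ℂ Mat X)
  have h3 := (NormedSpace.exp_series_hasSum_exp' (𝕂 := ℂ) A).mapL
    (LinearMap.toContinuousLinearMap (LinearMap.mulRight ℂ X))
  refine HasSum.unique h2 (h3.congr_fun ?_)
  intro k
  simp only [ContinuousLinearMap.apply_apply, ContinuousLinearMap.smul_apply,
    ContinuousLinearMap.map_smul, LinearMap.coe_toContinuousLinearMap',
    LinearMap.mulRight_apply]
  rw [mulLeftCLM_pow]

private lemma exp_mulRightCLM (B : Mat) (X : Mat) :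
    (NormedSpace.exp (LinearMap.toContinuousLinearMap (LinearMap.mulRight ℂ B))) X =
      X * NormedSpace.exp B := by
  have h1 : HasSum (fun k : ℕ => ((k.factorial : ℂ))⁻¹ •
        ((LinearMap.toContinuousLinearMap (LinearMap.mulRight ℂ B)) ^ k))
      (NormedSpace.exp (LinearMap.toContinuousLinearMap (LinearMap.mulRight ℂ B))) :=
    NormedSpace.exp_series_hasSum_exp' _
  have h2 := h1.mapL (ContinuousLinearMap.apply ℂ Mat X)
  have h3 := (NormedSpace.exp_series_hasSum_exp' (𝕂 := ℂ) B).mapL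
    (LinearMap.toContinuousLinearMap (LinearMap.mulLeft ℂ X))
  refine HasSum.unique h2 (h3.congr_fun ?_)
  intro k
  simp only [ContinuousLinearMap.apply_apply, ContinuousLinearMap.smul_apply,
    ContinuousLinearMap.map_smul, LinearMap.coe_toContinuousLinearMap',
    LinearMap.mulLeft_apply]
  rw [mulRightCLM_pow]

private lemma exp_lmul_rmul (A B : Mat) (X : Mat) :
    (NormedSpace.exp (LinearMap.toContinuousLinearMap
        (LinearMap.mulLeft ℂ A + LinearMap.mulRight ℂ B))) X =
      NormedSpace.exp A * X * NormedSpace.exp B := by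
  have hcomm : Commute (LinearMap.toContinuousLinearMap (LinearMap.mulLeft ℂ A))
      (LinearMap.toContinuousLinearMap (LinearMap.mulRight ℂ B)) := by
    apply ContinuousLinearMap.ext
    intro Y
    show (LinearMap.toContinuousLinearMap (LinearMap.mulLeft ℂ A))
        ((LinearMap.toContinuousLinearMap (LinearMap.mulRight ℂ B)) Y) =
      (LinearMap.toContinuousLinearMap (LinearMap.mulRight ℂ B))
        ((LinearMap.toContinuousLinearMap (LinearMap.mulLeft ℂ A)) Y)
    simp [mul_assoc]
  have hadd : LinearMap.toContinuousLinearMap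
      (LinearMap.mulLeft ℂ A + LinearMap.mulRight ℂ B) =
      LinearMap.toContinuousLinearMap (LinearMap.mulLeft ℂ A) +
        LinearMap.toContinuousLinearMap (LinearMap.mulRight ℂ B) :=
    map_add _ _ _
  letI : NormedAlgebra ℚ (Mat →L[ℂ] Mat) := NormedAlgebra.restrictScalars ℚ ℂ _
  rw [hadd, NormedSpace.exp_add_of_commute hcomm, ContinuousLinearMap.mul_apply,
    exp_mulRightCLM, exp_mulLeftCLM, mul_assoc]

private lemma exp_conjTranspose (N : Mat) :
    NormedSpace.exp Nᴴ = (NormedSpace.exp N)ᴴ := by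
  rw [← Matrix.star_eq_conjTranspose, ← Matrix.star_eq_conjTranspose,
    NormedSpace.star_exp]

private lemma exp_genL_cp (M : Mat) (s : ℝ) :
    IsCompletelyPositive ⇑(NormedSpace.exp ((s : ℂ) •
      (LinearMap.toContinuousLinearMap
        (LinearMap.mulLeft ℂ M + LinearMap.mulRight ℂ Mᴴ)))) := by
  have hsmul : (s : ℂ) • (LinearMap.toContinuousLinearMap
      (LinearMap.mulLeft ℂ M + LinearMap.mulRight ℂ Mᴴ)) =
      LinearMap.toContinuousLinearMap
        (LinearMap.mulLeft ℂ ((s : ℂ) • M) + LinearMap.mulRight ℂ (((s : ℂ) • M)ᴴ)) := by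
    apply ContinuousLinearMap.ext
    intro X
    show (s : ℂ) • (M * X + X * Mᴴ) = ((s : ℂ) • M) * X + X * ((s : ℂ) • M)ᴴ
    rw [Matrix.conjTranspose_smul, Complex.star_def, Complex.conj_ofReal,
      smul_add, smul_mul_assoc, mul_smul_comm]
  rw [hsmul]
  have hfun : ⇑(NormedSpace.exp (LinearMap.toContinuousLinearMap
      (LinearMap.mulLeft ℂ ((s : ℂ) • M) + LinearMap.mulRight ℂ (((s : ℂ) • M)ᴴ)))) =
      fun X => NormedSpace.exp ((s : ℂ) • M) * X * (NormedSpace.exp ((s : ℂ) • M))ᴴ := by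
    funext X
    rw [exp_lmul_rmul, exp_conjTranspose]
  rw [hfun]
  exact cp_conj _

private lemma exp_cp_aux (d : ℕ)
    (Φ : Matrix (Fin d) (Fin d) ℂ →L[ℂ] Matrix (Fin d) (Fin d) ℂ)
    (hherm : ∀ A : Matrix (Fin d) (Fin d) ℂ, A.IsHermitian → (Φ A).IsHermitian)
    (hccp : ∃ K' : Matrix (Fin d) (Fin d) ℂ,
      IsCompletelyPositive fun X => Φ X - K' * X - X * K'ᴴ) :
    ∀ (K : Matrix (Fin d) (Fin d) ℂ) (t : ℝ), 0 ≤ t →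
      IsCompletelyPositive ⇑(NormedSpace.exp ((t : ℂ) •
        (LinearMap.toContinuousLinearMap
          (LinearMap.mulLeft ℂ K + LinearMap.mulRight ℂ Kᴴ) + Φ))) := by
  intro K t ht
  obtain ⟨K', hK'⟩ := hccp
  rcases Nat.eq_zero_or_pos d with hd | hd
  · -- trivial case `d = 0`
    subst hd
    intro n A _
    refine Matrix.PosSemidef.of_dotProduct_mulVec_nonneg ?_ ?_
    · ext p q
      exact p.2.elim0
    · intro x
      have h0 : ∀ B : Matrix (Fin n × Fin 0) (Fin n × Fin 0) ℂ,
          star x ⬝ᵥ B *ᵥ x = 0 := fun B => by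
        rw [dotProduct, Finset.univ_eq_empty, Finset.sum_empty]
      rw [h0]
  · haveI : NeZero d := ⟨hd.ne'⟩
    haveI : Nontrivial (Matrix (Fin d) (Fin d) ℂ) := by
      refine ⟨0, 1, fun h => ?_⟩
      have := congrFun (congrFun h ⟨0, hd⟩) ⟨0, hd⟩
      simp [Matrix.one_apply] at this
    set M : Matrix (Fin d) (Fin d) ℂ := K + K' with hM
    set Ψ : Matrix (Fin d) (Fin d) ℂ →L[ℂ] Matrix (Fin d) (Fin d) ℂ :=
      Φ - LinearMap.toContinuousLinearMap
        (LinearMap.mulLeft ℂ K' + LinearMap.mulRight ℂ K'ᴴ) with hΨ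
    set L : Matrix (Fin d) (Fin d) ℂ →L[ℂ] Matrix (Fin d) (Fin d) ℂ :=
      LinearMap.toContinuousLinearMap
        (LinearMap.mulLeft ℂ M + LinearMap.mulRight ℂ Mᴴ) with hL
    have hΨcp : IsCompletelyPositive ⇑Ψ := by
      have hfun : ⇑Ψ = fun X => Φ X - K' * X - X * K'ᴴ := by
        funext X
        show Φ X - (K' * X + X * K'ᴴ) = Φ X - K' * X - X * K'ᴴ
        rw [sub_sub]
      rw [hfun]
      exact hK'
    have hdecomp : LinearMap.toContinuousLinearMap
        (LinearMap.mulLeft ℂ K + LinearMap.mulRight ℂ Kᴴ) + Φ = L + Ψ := by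
      apply ContinuousLinearMap.ext
      intro X
      show K * X + X * Kᴴ + Φ X = (M * X + X * Mᴴ) + (Φ X - (K' * X + X * K'ᴴ))
      rw [hM, Matrix.conjTranspose_add, Matrix.add_mul, Matrix.mul_add]
      abel
    rw [hdecomp, smul_add]
    have htrot := trotter ((t : ℂ) • L) ((t : ℂ) • Ψ)
    refine cp_of_tendsto htrot ?_
    intro n
    refine cp_pow ?_ n
    have hsm : ∀ (T : Matrix (Fin d) (Fin d) ℂ →L[ℂ] Matrix (Fin d) (Fin d) ℂ),
        (n : ℂ)⁻¹ • ((t : ℂ) • T) = (((t / n : ℝ)) : ℂ) • T := by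
      intro T
      rw [smul_smul]
      congr 1
      push_cast
      rw [div_eq_inv_mul]
    have ha : IsCompletelyPositive
        ⇑(NormedSpace.exp ((n : ℂ)⁻¹ • ((t : ℂ) • L))) := by
      rw [hsm L, hL]
      exact exp_genL_cp M (t / n)
    have hb : IsCompletelyPositive
        ⇑(NormedSpace.exp ((n : ℂ)⁻¹ • ((t : ℂ) • Ψ))) := by
      rw [hsm Ψ]
      exact cp_exp hΨcp (t / n) (by positivity)
    have hcoe : ⇑(NormedSpace.exp ((n : ℂ)⁻¹ • ((t : ℂ) • L)) *
        NormedSpace.exp ((n : ℂ)⁻¹ • ((t : ℂ) • Ψ))) =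
        fun X => (NormedSpace.exp ((n : ℂ)⁻¹ • ((t : ℂ) • L)))
          ((NormedSpace.exp ((n : ℂ)⁻¹ • ((t : ℂ) • Ψ))) X) := rfl
    rw [hcoe]
    exact cp_comp ha hb

end CPAux

/-- Let `Φ` be a Hermitian-preserving linear map on `ℂ^{d×d}`. If there exists
`K' ∈ ℂ^{d×d}` such that `X ↦ Φ X − K' X − X (K')ᴴ` is completely positive, then
`exp (t (K(·) + (·)Kᴴ + Φ))` is completely positive for all `K ∈ ℂ^{d×d}` and all `t ≥ 0`. -/
theorem exp_completelyPositive_of_ccp (d : ℕ)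
    (Φ : Matrix (Fin d) (Fin d) ℂ →L[ℂ] Matrix (Fin d) (Fin d) ℂ)
    (hherm : ∀ A : Matrix (Fin d) (Fin d) ℂ, A.IsHermitian → (Φ A).IsHermitian)
    (hccp : ∃ K' : Matrix (Fin d) (Fin d) ℂ,
      IsCompletelyPositive fun X => Φ X - K' * X - X * K'ᴴ) :
    ∀ (K : Matrix (Fin d) (Fin d) ℂ) (t : ℝ), 0 ≤ t →
      IsCompletelyPositive ⇑(NormedSpace.exp ((t : ℂ) •
        (LinearMap.toContinuousLinearMap
          (LinearMap.mulLeft ℂ K + LinearMap.mulRight ℂ Kᴴ) + Φ))) := by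
  exact exp_cp_aux d Φ hherm hccp
end

section
/- For all α ∈ (0,1] and all φ = (φ_1, φ_2, φ_3) ∈ ℂ^3, the 3×3 Hermitian matrix M with entries M_{11} = α(|φ_1|²+|φ_2|²), M_{12} = φ_1 \overline{φ_2}, M_{13} = α φ_1 \overline{φ_3}, M_{22} = (|φ_2|²+|φ_3|²)/α, M_{23} = φ_3 \overline{φ_2}, M_{33} = α|φ_3|² + |φ_1|²/α (and M Hermitian) is positive semi-definite. -/
open scoped ComplexOrder

private theorem Hlem_aux (α p q r : ℝ) (hα0 : 0 < α) (hα1 : α ≤ 1)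
    (hp : 0 ≤ p) (hr : 0 ≤ r) :
    0 ≤ p^2*q^4 + p^4*r^2 + α^2*q^2*r^4 + p^2*q^2*r^2 - 4*α^2*p^2*q^2*r^2 := by
  have hαα : α^4 ≤ α := by nlinarith [sq_nonneg (1-α), sq_nonneg α, sq_nonneg (α - α^2)]
  have h1 : 2*(p^3*q^2*r) ≤ p^2*q^4 + p^4*r^2 := by nlinarith [sq_nonneg (p*q^2 - p^2*r)]
  have h2 : 2*(α*(p*q^2*r^3)) ≤ α^2*q^2*r^4 + p^2*q^2*r^2 := by
    nlinarith [sq_nonneg (α*q*r^2 - p*q*r)]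
  have hu : 0 ≤ p^3*q^2*r := by positivity
  have hv : 0 ≤ α*(p*q^2*r^3) := by positivity
  have he : 0 ≤ (α - α^4)*(p^4*q^4*r^4) := by
    have : 0 ≤ α - α^4 := by linarith
    positivity
  have h3 : 4*(α^2*(p^2*q^2*r^2)) ≤ 2*(p^3*q^2*r) + 2*(α*(p*q^2*r^3)) := by
    nlinarith [sq_nonneg (p^3*q^2*r - α*p*q^2*r^3), hu, hv, he, sq_nonneg (p*q*r),
      mul_nonneg hu hv, sq_nonneg (α^2*p^2*q^2*r^2)]
  linarith

set_option maxHeartbeats 1600000 in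
private theorem keyG_aux (α p q r y1 y2 y3 : ℝ) (hα0 : 0 < α) (hα1 : α ≤ 1)
    (hp : 0 ≤ p) (hq : 0 ≤ q) (hr : 0 ≤ r) :
    2*α*p*q*y1*y2 + 2*α^2*p*r*y1*y3 + 2*α*q*r*y2*y3 ≤
      α^2*(p^2+q^2)*y1^2 + (q^2+r^2)*y2^2 + (α^2*r^2+p^2)*y3^2 := by
  have hprod : 0 ≤ (α^2*(2*p^2+q^2)) * (2*q^2+r^2) * (2*α^2*r^2+p^2) *
      (α^2*(p^2+q^2)*y1^2 + (q^2+r^2)*y2^2 + (α^2*r^2+p^2)*y3^2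
        - (2*α*p*q*y1*y2 + 2*α^2*p*r*y1*y3 + 2*α*q*r*y2*y3)) := by
    have hH : 0 ≤ α^2*(p^2*q^4 + p^4*r^2 + α^2*q^2*r^4 + p^2*q^2*r^2 - 4*α^2*p^2*q^2*r^2) :=
      mul_nonneg (sq_nonneg α) (Hlem_aux α p q r hα0 hα1 hp hr)
    have hS : 0 ≤ (α^2*(2*p^2+q^2))*y1^2 + (2*q^2+r^2)*y2^2 + (2*α^2*r^2+p^2)*y3^2 := by
      positivity
    have hSOS : 0 ≤ (2*α^2*r^2+p^2)*((2*q^2+r^2)*(α*p)*y2 - (α^2*(2*p^2+q^2))*q*y1)^2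
        + (2*q^2+r^2)*((2*α^2*r^2+p^2)*(α*p)*y3 - (α^2*(2*p^2+q^2))*(α*r)*y1)^2
        + (α^2*(2*p^2+q^2))*((2*α^2*r^2+p^2)*q*y3 - (2*q^2+r^2)*(α*r)*y2)^2 := by
      positivity
    have hid : (α^2*(2*p^2+q^2)) * (2*q^2+r^2) * (2*α^2*r^2+p^2) *
        (α^2*(p^2+q^2)*y1^2 + (q^2+r^2)*y2^2 + (α^2*r^2+p^2)*y3^2
          - (2*α*p*q*y1*y2 + 2*α^2*p*r*y1*y3 + 2*α*q*r*y2*y3))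
        = α^2*(p^2*q^4 + p^4*r^2 + α^2*q^2*r^4 + p^2*q^2*r^2 - 4*α^2*p^2*q^2*r^2)
            * ((α^2*(2*p^2+q^2))*y1^2 + (2*q^2+r^2)*y2^2 + (2*α^2*r^2+p^2)*y3^2)
          + ((2*α^2*r^2+p^2)*((2*q^2+r^2)*(α*p)*y2 - (α^2*(2*p^2+q^2))*q*y1)^2
            + (2*q^2+r^2)*((2*α^2*r^2+p^2)*(α*p)*y3 - (α^2*(2*p^2+q^2))*(α*r)*y1)^2
            + (α^2*(2*p^2+q^2))*((2*α^2*r^2+p^2)*q*y3 - (2*q^2+r^2)*(α*r)*y2)^2) := by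
      ring
    linarith [mul_nonneg hH hS, hSOS]
  rcases lt_or_ge 0 ((α^2*(2*p^2+q^2)) * (2*q^2+r^2) * (2*α^2*r^2+p^2)) with hd | hd
  · nlinarith [hprod, hd]
  · have hd0 : (α^2*(2*p^2+q^2)) * (2*q^2+r^2) * (2*α^2*r^2+p^2) = 0 := by
      have : 0 ≤ (α^2*(2*p^2+q^2)) * (2*q^2+r^2) * (2*α^2*r^2+p^2) := by positivity
      linarith
    have hα2 : 0 < α^2 := by positivity
    rcases mul_eq_zero.mp hd0 with h12 | h3
    · rcases mul_eq_zero.mp h12 with h1 | h2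
      · have h1' : 2*p^2+q^2 = 0 := by
          rcases mul_eq_zero.mp h1 with h | h
          · exact absurd h (pow_ne_zero 2 hα0.ne')
          · exact h
        have hp0 : p = 0 := by
          have : p^2 = 0 := by linarith [sq_nonneg p, sq_nonneg q]
          exact sq_eq_zero_iff.mp this
        have hq0 : q = 0 := by
          have : q^2 = 0 := by linarith [sq_nonneg p, sq_nonneg q]
          exact sq_eq_zero_iff.mp this
        subst hp0; subst hq0
        nlinarith [sq_nonneg (r*y2), sq_nonneg (α*r*y3)]
      · have hq0 : q = 0 := by
          have : q^2 = 0 := by linarith [sq_nonneg q, sq_nonneg r]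
          exact sq_eq_zero_iff.mp this
        have hr0 : r = 0 := by
          have : r^2 = 0 := by linarith [sq_nonneg q, sq_nonneg r]
          exact sq_eq_zero_iff.mp this
        subst hq0; subst hr0
        nlinarith [sq_nonneg (α*p*y1), sq_nonneg (p*y3)]
    · have hr0 : r = 0 := by
        have : r^2 = 0 := by nlinarith [sq_nonneg p, sq_nonneg r, mul_pos hα0 hα0]
        exact sq_eq_zero_iff.mp this
      have hp0 : p = 0 := by
        have : p^2 = 0 := by nlinarith [sq_nonneg p, sq_nonneg r, mul_pos hα0 hα0]
        exact sq_eq_zero_iff.mp this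
      subst hp0; subst hr0
      nlinarith [sq_nonneg (α*q*y1), sq_nonneg (q*y2)]

private theorem keyF_aux (α p q r y1 y2 y3 : ℝ) (hα0 : 0 < α) (hα1 : α ≤ 1)
    (hp : 0 ≤ p) (hq : 0 ≤ q) (hr : 0 ≤ r) :
    2*p*q*y1*y2 + 2*α*p*r*y1*y3 + 2*q*r*y2*y3 ≤
      α*(p^2+q^2)*y1^2 + (q^2+r^2)/α*y2^2 + (α*r^2+p^2/α)*y3^2 := by
  rw [← sub_nonneg]
  have h := keyG_aux α p q r y1 y2 y3 hα0 hα1 hp hq hr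
  have hrw : α*(p^2+q^2)*y1^2 + (q^2+r^2)/α*y2^2 + (α*r^2+p^2/α)*y3^2
      - (2*p*q*y1*y2 + 2*α*p*r*y1*y3 + 2*q*r*y2*y3)
      = (α^2*(p^2+q^2)*y1^2 + (q^2+r^2)*y2^2 + (α^2*r^2+p^2)*y3^2
        - (2*α*p*q*y1*y2 + 2*α^2*p*r*y1*y3 + 2*α*q*r*y2*y3)) / α := by
    field_simp
  rw [hrw]
  exact div_nonneg (by linarith) hα0.le

set_option maxHeartbeats 1000000 in
open Complex in
/-- For all `α ∈ (0,1]` and all `φ = (φ₁, φ₂, φ₃) ∈ ℂ³`, the `3×3` Hermitian matrix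
`M` with entries `M₁₁ = α(|φ₁|²+|φ₂|²)`, `M₁₂ = φ₁ conj φ₂`, `M₁₃ = α φ₁ conj φ₃`,
`M₂₂ = (|φ₂|²+|φ₃|²)/α`, `M₂₃ = φ₃ conj φ₂`, `M₃₃ = α|φ₃|² + |φ₁|²/α` (and `M` Hermitian)
is positive semi-definite. -/
theorem lambda_alpha_posSemidef (α : ℝ) (hα0 : 0 < α) (hα1 : α ≤ 1) (φ₁ φ₂ φ₃ : ℂ) :
    (Matrix.of
      !![(α : ℂ) * ((normSq φ₁ + normSq φ₂ : ℝ) : ℂ),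
          φ₁ * starRingEnd ℂ φ₂,
          (α : ℂ) * (φ₁ * starRingEnd ℂ φ₃);
        φ₂ * starRingEnd ℂ φ₁,
          ((normSq φ₂ + normSq φ₃ : ℝ) : ℂ) / (α : ℂ),
          φ₃ * starRingEnd ℂ φ₂;
        (α : ℂ) * (φ₃ * starRingEnd ℂ φ₁),
          φ₂ * starRingEnd ℂ φ₃,
          (α : ℂ) * ((normSq φ₃ : ℝ) : ℂ) + ((normSq φ₁ : ℝ) : ℂ) / (α : ℂ)]).PosSemidef := by
  rw [Matrix.posSemidef_iff_dotProduct_mulVec]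
  have hof : ∀ M : Matrix (Fin 3) (Fin 3) ℂ, Matrix.of M = M := fun _ => rfl
  constructor
  · ext i j
    fin_cases i <;> fin_cases j <;>
      simp [hof, Matrix.conjTranspose_apply, Matrix.of_apply, map_mul, map_add, map_div₀, Complex.conj_ofReal]
    all_goals first
      | ring1
      | (left; ring1)
  · intro x
    have hα : (α:ℂ) ≠ 0 := by exact_mod_cast hα0.ne'
    have hexp : dotProduct (star x) ((Matrix.of
      !![(α : ℂ) * ((normSq φ₁ + normSq φ₂ : ℝ) : ℂ),
          φ₁ * starRingEnd ℂ φ₂,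
          (α : ℂ) * (φ₁ * starRingEnd ℂ φ₃);
        φ₂ * starRingEnd ℂ φ₁,
          ((normSq φ₂ + normSq φ₃ : ℝ) : ℂ) / (α : ℂ),
          φ₃ * starRingEnd ℂ φ₂;
        (α : ℂ) * (φ₃ * starRingEnd ℂ φ₁),
          φ₂ * starRingEnd ℂ φ₃,
          (α : ℂ) * ((normSq φ₃ : ℝ) : ℂ) + ((normSq φ₁ : ℝ) : ℂ) / (α : ℂ)]).mulVec x) =
      ((α*(normSq φ₁ + normSq φ₂)*normSq (x 0) + (normSq φ₂ + normSq φ₃)/α*normSq (x 1)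
        + (α*normSq φ₃ + normSq φ₁/α)*normSq (x 2)
        + 2*(φ₁ * starRingEnd ℂ φ₂ * starRingEnd ℂ (x 0) * (x 1)).re
        + 2*α*(φ₁ * starRingEnd ℂ φ₃ * starRingEnd ℂ (x 0) * (x 2)).re
        + 2*(φ₃ * starRingEnd ℂ φ₂ * starRingEnd ℂ (x 1) * (x 2)).re : ℝ) : ℂ) := by
      simp only [hof, dotProduct, Matrix.mulVec, Fin.sum_univ_three, Pi.star_apply,
        Matrix.of_apply, Matrix.cons_val', Matrix.cons_val_zero, Matrix.cons_val_one,
        Matrix.head_cons, Matrix.empty_val', Matrix.cons_val_fin_one, Matrix.head_fin_const,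
        Matrix.cons_val_two, Matrix.tail_cons, RCLike.star_def]
      rw [Complex.ext_iff]
      constructor <;>
      · simp [Complex.div_re, Complex.div_im, Complex.normSq_apply, Complex.mul_re,
          Complex.mul_im, Complex.add_re, Complex.add_im, Complex.ofReal_re, Complex.ofReal_im]
        field_simp
        ring
    rw [hexp, Complex.zero_le_real]
    have a12 : ‖(φ₁ * starRingEnd ℂ φ₂ * starRingEnd ℂ (x 0) * (x 1))‖
        = ‖φ₁‖ * ‖φ₂‖ * ‖(x 0)‖ * ‖(x 1)‖ := by
      simp [map_mul, Complex.norm_conj]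
    have a13 : ‖(φ₁ * starRingEnd ℂ φ₃ * starRingEnd ℂ (x 0) * (x 2))‖
        = ‖φ₁‖ * ‖φ₃‖ * ‖(x 0)‖ * ‖(x 2)‖ := by
      simp [map_mul, Complex.norm_conj]
    have a23 : ‖(φ₃ * starRingEnd ℂ φ₂ * starRingEnd ℂ (x 1) * (x 2))‖
        = ‖φ₃‖ * ‖φ₂‖ * ‖(x 1)‖ * ‖(x 2)‖ := by
      simp [map_mul, Complex.norm_conj]
    have h12 : -(‖φ₁‖ * ‖φ₂‖ * ‖(x 0)‖ * ‖(x 1)‖)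
        ≤ (φ₁ * starRingEnd ℂ φ₂ * starRingEnd ℂ (x 0) * (x 1)).re := by
      rw [← a12]; exact (abs_le.mp (Complex.abs_re_le_norm _)).1
    have h13' : -(‖φ₁‖ * ‖φ₃‖ * ‖(x 0)‖ * ‖(x 2)‖)
        ≤ (φ₁ * starRingEnd ℂ φ₃ * starRingEnd ℂ (x 0) * (x 2)).re := by
      rw [← a13]; exact (abs_le.mp (Complex.abs_re_le_norm _)).1
    have h23 : -(‖φ₃‖ * ‖φ₂‖ * ‖(x 1)‖ * ‖(x 2)‖)
        ≤ (φ₃ * starRingEnd ℂ φ₂ * starRingEnd ℂ (x 1) * (x 2)).re := by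
      rw [← a23]; exact (abs_le.mp (Complex.abs_re_le_norm _)).1
    have h13 := mul_le_mul_of_nonneg_left h13' (by linarith : (0:ℝ) ≤ 2*α)
    have hk := keyF_aux α (‖φ₁‖) (‖φ₂‖) (‖φ₃‖)
      (‖(x 0)‖) (‖(x 1)‖) (‖(x 2)‖) hα0 hα1
      (norm_nonneg _) (norm_nonneg _) (norm_nonneg _)
    simp only [← Complex.sq_norm]
    linarith [hk, h12, h13, h23]
end
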